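/- arXiv:2404.19034 — 10 statements merged into one kernel-verified Lean document; each statement's English description precedes it below -/
import Mathlib

section
/- For every ξ > 0, the integral ∫₀^ξ 2 sinh(ξ−z) sinh(z) / (ξ² − z²) dz is at most log(64/27)·sinh(ξ); consequently sinh(ξ) − ∫₀^ξ 2 sinh(ξ−z) sinh(z)/(ξ²−z²) dz ≥ (1 − log(64/27))·sinh(ξ) > 0. -/
open Real intervalIntegral MeasureTheory

lemma sinh_nonneg_aux {x : ℝ} (hx : 0 ≤ x) : 0 ≤ Real.sinh x := by
  simpa using Real.sinh_le_sinh.2 hx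

lemma sinh_pos_aux {x : ℝ} (hx : 0 < x) : 0 < Real.sinh x := by
  simpa using Real.sinh_lt_sinh.2 hx

lemma sinh_le_mul_cosh {x : ℝ} (hx : 0 ≤ x) : Real.sinh x ≤ x * Real.cosh x := by
  have hmono : MonotoneOn (fun t : ℝ => t * Real.cosh t - Real.sinh t) (Set.Ici 0) := by
    have hd : ∀ t : ℝ, HasDerivAt (fun t : ℝ => t * Real.cosh t - Real.sinh t)
        (t * Real.sinh t) t := by
      intro t
      have h1 := ((hasDerivAt_id t).mul (Real.hasDerivAt_cosh t)).sub (Real.hasDerivAt_sinh t)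
      exact h1.congr_deriv (by simp only [id_eq]; ring)
    apply monotoneOn_of_deriv_nonneg (convex_Ici 0)
    · exact (Continuous.continuousOn (by fun_prop))
    · intro t ht
      exact (hd t).differentiableAt.differentiableWithinAt
    · intro t ht
      rw [(hd t).deriv]
      have ht' : 0 < t := by simpa using ht
      exact mul_nonneg ht'.le (sinh_nonneg_aux ht'.le)
  have h0 : (0:ℝ) ∈ Set.Ici (0:ℝ) := Set.self_mem_Ici
  have hx' : x ∈ Set.Ici (0:ℝ) := hx
  have := hmono h0 hx' hx
  simp only [Real.sinh_zero, Real.cosh_zero, zero_mul, sub_zero, sub_self] at this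
  linarith

lemma key_sinh (ξ z : ℝ) (h0 : 0 ≤ z) (h1 : z ≤ ξ) :
    Real.sinh (ξ - z) * Real.sinh z ≤ z * Real.sinh ξ := by
  have hsum : Real.sinh ξ = Real.sinh (ξ - z) * Real.cosh z + Real.cosh (ξ - z) * Real.sinh z := by
    rw [← Real.sinh_add]; ring_nf
  have h2 : Real.sinh z ≤ z * Real.cosh z := sinh_le_mul_cosh h0
  have h3 : 0 ≤ Real.sinh (ξ - z) := sinh_nonneg_aux (by linarith)
  have h4 : 0 ≤ Real.sinh z := sinh_nonneg_aux h0
  have h5 : 0 < Real.cosh (ξ - z) := Real.cosh_pos _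
  nlinarith [mul_nonneg h0 (mul_nonneg h5.le h4), mul_nonneg h3 (sub_nonneg.2 h2)]

/-- For every `ξ > 0`, `∫₀^ξ 2 sinh(ξ−z) sinh(z)/(ξ²−z²) dz ≤ log(64/27)·sinh ξ`;
consequently `sinh ξ − ∫₀^ξ 2 sinh(ξ−z) sinh(z)/(ξ²−z²) dz ≥ (1 − log(64/27))·sinh ξ > 0`. -/
theorem statement3 (ξ : ℝ) (hξ : 0 < ξ) :
    (∫ z in (0:ℝ)..ξ, 2 * Real.sinh (ξ - z) * Real.sinh z / (ξ ^ 2 - z ^ 2))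
        ≤ Real.log (64 / 27) * Real.sinh ξ ∧
    (1 - Real.log (64 / 27)) * Real.sinh ξ ≤
        Real.sinh ξ - ∫ z in (0:ℝ)..ξ, 2 * Real.sinh (ξ - z) * Real.sinh z / (ξ ^ 2 - z ^ 2) ∧
    0 < (1 - Real.log (64 / 27)) * Real.sinh ξ := by
  set f : ℝ → ℝ := fun z => 2 * Real.sinh (ξ - z) * Real.sinh z / (ξ ^ 2 - z ^ 2) with hf
  set S := Real.sinh ξ with hS
  have hSpos : 0 < S := sinh_pos_aux hξ
  -- measurability of f
  have hfmeas : Measurable f := by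
    apply Measurable.div
    · exact ((measurable_const.mul ((Real.continuous_sinh.measurable).comp
        (measurable_const.sub measurable_id))).mul Real.continuous_sinh.measurable)
    · exact measurable_const.sub (measurable_id.pow_const 2)
  -- g1 bound on [0, ξ/2]
  set g1 : ℝ → ℝ := fun z => S * (2 * z / (ξ ^ 2 - z ^ 2)) with hg1
  set g2 : ℝ → ℝ := fun z => S * (2 / (ξ + z)) with hg2
  have hden1 : ∀ z ∈ Set.uIcc (0:ℝ) (ξ/2), ξ ^ 2 - z ^ 2 ≠ 0 := by
    intro z hz
    rw [Set.uIcc_of_le (by linarith)] at hz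
    obtain ⟨hz0, hz1⟩ := hz
    nlinarith
  have hden2 : ∀ z ∈ Set.uIcc (ξ/2) ξ, ξ + z ≠ 0 := by
    intro z hz
    rw [Set.uIcc_of_le (by linarith)] at hz
    obtain ⟨hz0, hz1⟩ := hz
    nlinarith
  -- continuity / integrability of g1, g2 and f on first piece
  have hcontf1 : ContinuousOn f (Set.uIcc (0:ℝ) (ξ/2)) := by
    apply ContinuousOn.div
    · exact (Continuous.continuousOn (by fun_prop))
    · exact (Continuous.continuousOn (by fun_prop))
    · exact hden1
  have hintf1 : IntervalIntegrable f volume 0 (ξ/2) := hcontf1.intervalIntegrable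
  have hcontg1 : ContinuousOn g1 (Set.uIcc (0:ℝ) (ξ/2)) := by
    apply ContinuousOn.mul continuousOn_const
    apply ContinuousOn.div
    · exact (Continuous.continuousOn (by fun_prop))
    · exact (Continuous.continuousOn (by fun_prop))
    · exact hden1
  have hintg1 : IntervalIntegrable g1 volume 0 (ξ/2) := hcontg1.intervalIntegrable
  have hcontg2 : ContinuousOn g2 (Set.uIcc (ξ/2) ξ) := by
    apply ContinuousOn.mul continuousOn_const
    apply ContinuousOn.div continuousOn_const
    · exact (Continuous.continuousOn (by fun_prop))
    · exact hden2
  have hintg2 : IntervalIntegrable g2 volume (ξ/2) ξ := hcontg2.intervalIntegrable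
  -- pointwise bound on [0, ξ/2]
  have hb1 : ∀ z ∈ Set.Icc (0:ℝ) (ξ/2), f z ≤ g1 z := by
    intro z hz
    obtain ⟨hz0, hz1⟩ := hz
    have hd : 0 < ξ ^ 2 - z ^ 2 := by nlinarith
    have hk : Real.sinh (ξ - z) * Real.sinh z ≤ z * S := key_sinh ξ z hz0 (by linarith)
    have : 2 * Real.sinh (ξ - z) * Real.sinh z / (ξ ^ 2 - z ^ 2)
        ≤ 2 * (z * S) / (ξ ^ 2 - z ^ 2) := by
      apply div_le_div_of_nonneg_right ?_ hd.le |>.trans_eq rfl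
      · linarith
    calc f z ≤ 2 * (z * S) / (ξ ^ 2 - z ^ 2) := by
          simpa [hf, mul_assoc] using this
      _ = g1 z := by rw [hg1]; ring
  -- pointwise bound on [ξ/2, ξ]
  have hb2 : ∀ z ∈ Set.Icc (ξ/2) ξ, f z ≤ g2 z := by
    intro z hz
    obtain ⟨hz0, hz1⟩ := hz
    have hxz : 0 < ξ + z := by linarith
    rcases eq_or_lt_of_le hz1 with heq | hlt
    · have : f z = 0 := by
        simp [hf, heq, Real.sinh_zero]
      rw [this, hg2]
      positivity
    · have hd : 0 < ξ ^ 2 - z ^ 2 := by nlinarith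
      have hk : Real.sinh z * Real.sinh (ξ - z) ≤ (ξ - z) * S := by
        have := key_sinh ξ (ξ - z) (by linarith) (by linarith)
        simpa [sub_sub_cancel] using this
      have h1 : f z ≤ 2 * ((ξ - z) * S) / (ξ ^ 2 - z ^ 2) := by
        rw [hf]
        apply div_le_div_of_nonneg_right ?_ hd.le
        nlinarith
      have h2 : 2 * ((ξ - z) * S) / (ξ ^ 2 - z ^ 2) = g2 z := by
        rw [hg2]
        have hfac : ξ ^ 2 - z ^ 2 = (ξ - z) * (ξ + z) := by ring
        have hne1 : ξ - z ≠ 0 := by linarith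
        have hne2 : ξ + z ≠ 0 := by linarith
        rw [hfac]
        field_simp
      linarith [h1, h2.le]
  -- f nonneg on (ξ/2, ξ]
  have hfnn : ∀ z ∈ Set.Ioc (ξ/2) ξ, 0 ≤ f z := by
    intro z hz
    obtain ⟨hz0, hz1⟩ := hz
    rw [hf]
    apply div_nonneg
    · have := sinh_nonneg_aux (show (0:ℝ) ≤ ξ - z by linarith)
      have := sinh_nonneg_aux (show (0:ℝ) ≤ z by linarith)
      positivity
    · nlinarith
  -- integrability of f on [ξ/2, ξ] by domination
  have hintf2 : IntervalIntegrable f volume (ξ/2) ξ := by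
    apply hintg2.mono_fun' (hfmeas.aestronglyMeasurable)
    rw [Set.uIoc_of_le (by linarith : ξ/2 ≤ ξ)]
    filter_upwards [ae_restrict_mem measurableSet_Ioc] with z hz
    rw [Real.norm_eq_abs, abs_of_nonneg (hfnn z hz)]
    exact hb2 z (Set.Ioc_subset_Icc_self hz)
  -- split the integral
  have hsplit : (∫ z in (0:ℝ)..ξ, f z)
      = (∫ z in (0:ℝ)..(ξ/2), f z) + ∫ z in (ξ/2)..ξ, f z :=
    (integral_add_adjacent_intervals hintf1 hintf2).symm
  -- compute ∫ g1
  have hI1 : (∫ z in (0:ℝ)..(ξ/2), g1 z) = S * Real.log (4/3) := by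
    have hftc : (∫ z in (0:ℝ)..(ξ/2), 2 * z / (ξ ^ 2 - z ^ 2)) = Real.log (4/3) := by
      have hder : ∀ z ∈ Set.uIcc (0:ℝ) (ξ/2),
          HasDerivAt (fun z => -Real.log (ξ ^ 2 - z ^ 2)) (2 * z / (ξ ^ 2 - z ^ 2)) z := by
        intro z hz
        have hne := hden1 z hz
        have h1 : HasDerivAt (fun z : ℝ => ξ ^ 2 - z ^ 2) (-(2 * z)) z := by
          exact ((hasDerivAt_const z (ξ^2)).sub (hasDerivAt_pow 2 z)).congr_deriv (by simp)
        have h2 := (Real.hasDerivAt_log hne).comp z h1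
        have h3 := h2.neg
        exact h3.congr_deriv (by ring)
      have hcont : IntervalIntegrable (fun z => 2 * z / (ξ ^ 2 - z ^ 2)) volume 0 (ξ/2) := by
        apply ContinuousOn.intervalIntegrable
        apply ContinuousOn.div
        · exact (Continuous.continuousOn (by fun_prop))
        · exact (Continuous.continuousOn (by fun_prop))
        · exact hden1
      rw [integral_eq_sub_of_hasDerivAt hder hcont]
      have h34 : ξ ^ 2 - (ξ/2) ^ 2 = (3/4) * ξ ^ 2 := by ring
      have hξ2 : (0:ℝ) < ξ ^ 2 := by positivity
      rw [h34]
      rw [Real.log_mul (by norm_num) (ne_of_gt hξ2)]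
      have : (4:ℝ)/3 = (3/4 : ℝ)⁻¹ := by norm_num
      rw [this, Real.log_inv]
      simp
    rw [hg1]
    simp only
    rw [intervalIntegral.integral_const_mul, hftc]
  -- compute ∫ g2
  have hI2 : (∫ z in (ξ/2)..ξ, g2 z) = S * (2 * Real.log (4/3)) := by
    have hftc : (∫ z in (ξ/2)..ξ, 2 / (ξ + z)) = 2 * Real.log (4/3) := by
      have hder : ∀ z ∈ Set.uIcc (ξ/2) ξ,
          HasDerivAt (fun z => 2 * Real.log (ξ + z)) (2 / (ξ + z)) z := by
        intro z hz
        have hne := hden2 z hz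
        have h1 : HasDerivAt (fun z : ℝ => ξ + z) 1 z := by
          exact ((hasDerivAt_const z ξ).add (hasDerivAt_id z)).congr_deriv (by simp)
        have h2 := (Real.hasDerivAt_log hne).comp z h1
        have h3 := h2.const_mul 2
        exact h3.congr_deriv (by ring)
      have hcont : IntervalIntegrable (fun z => 2 / (ξ + z)) volume (ξ/2) ξ := by
        apply ContinuousOn.intervalIntegrable
        apply ContinuousOn.div continuousOn_const
        · exact (Continuous.continuousOn (by fun_prop))
        · exact hden2
      rw [integral_eq_sub_of_hasDerivAt hder hcont]
      have e1 : ξ + ξ = 2 * ξ := by ring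
      have e2 : ξ + ξ/2 = (3/2) * ξ := by ring
      rw [e1, e2, Real.log_mul (by norm_num) (ne_of_gt hξ),
        Real.log_mul (by norm_num) (ne_of_gt hξ)]
      have : Real.log 2 - Real.log (3/2) = Real.log (4/3) := by
        rw [← Real.log_div (by norm_num) (by norm_num)]
        norm_num
      ring_nf
      nlinarith [this]
    rw [hg2]
    simp only
    rw [intervalIntegral.integral_const_mul, hftc]
  -- combine
  have hmono1 : (∫ z in (0:ℝ)..(ξ/2), f z) ≤ ∫ z in (0:ℝ)..(ξ/2), g1 z :=
    integral_mono_on (by linarith) hintf1 hintg1 hb1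
  have hmono2 : (∫ z in (ξ/2)..ξ, f z) ≤ ∫ z in (ξ/2)..ξ, g2 z :=
    integral_mono_on (by linarith) hintf2 hintg2 hb2
  have hlog : Real.log (64/27) = 3 * Real.log (4/3) := by
    have : (64/27 : ℝ) = (4/3) ^ 3 := by norm_num
    rw [this, Real.log_pow]
    norm_num
  have hmain : (∫ z in (0:ℝ)..ξ, f z) ≤ Real.log (64/27) * S := by
    rw [hsplit, hlog]
    calc (∫ z in (0:ℝ)..(ξ/2), f z) + ∫ z in (ξ/2)..ξ, f z
        ≤ S * Real.log (4/3) + S * (2 * Real.log (4/3)) := by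
          rw [← hI1, ← hI2]; exact add_le_add hmono1 hmono2
      _ = 3 * Real.log (4/3) * S := by ring
  have hlog1 : Real.log (64/27) < 1 := by
    rw [show (1:ℝ) = Real.log (Real.exp 1) by rw [Real.log_exp]]
    apply Real.log_lt_log (by norm_num)
    linarith [Real.exp_one_gt_d9]
  refine ⟨hmain, by linarith, ?_⟩
  apply mul_pos (by linarith) hSpos
end

section
/- Let μ > 0, p > 0 and 0 < x* < μ. Let f : [x*,μ] → ℝ be continuous, twice continuously differentiable on [x*,μ), and satisfy f''(x) = ( 2/(x²−μ²) + p² ) f(x) for all x ∈ [x*,μ), with f(x*) = 0 and f'(x*) > 0. Then f(x) > 0 for all x* < x ≤ μ. (Likewise, if f'(x*) < 0 then f(x) < 0 for all x* < x ≤ μ.) -/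
open Set

lemma statement5_aux (μ p xs : ℝ) (hμ : 0 < μ) (hp : 0 < p) (hxs : 0 < xs) (hxsμ : xs < μ)
    (f : ℝ → ℝ)
    (hfc : ContinuousOn f (Set.Icc xs μ))
    (hf2 : ContDiffOn ℝ 2 f (Set.Ico xs μ))
    (hode : ∀ x ∈ Set.Ico xs μ,
      iteratedDerivWithin 2 f (Set.Ico xs μ) x = (2 / (x ^ 2 - μ ^ 2) + p ^ 2) * f x)
    (hf0 : f xs = 0)
    (hd : 0 < derivWithin f (Set.Ico xs μ) xs) :
    ∀ x, xs < x → x ≤ μ → 0 < f x := by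
  set s : Set ℝ := Set.Ico xs μ with hs
  have husd : UniqueDiffOn ℝ s := uniqueDiffOn_Ico xs μ
  set f' : ℝ → ℝ := derivWithin f s with hf'def
  have hf1 : ContDiffOn ℝ 1 f' s := hf2.derivWithin husd (by norm_num)
  have hfd : DifferentiableOn ℝ f s := hf2.differentiableOn (by norm_num)
  have hfcs : ContinuousOn f s := hfc.mono Set.Ico_subset_Icc_self
  have hf'c : ContinuousOn f' s := hf1.continuousOn
  -- pointwise derivative facts at interior points
  have hf'at : ∀ x ∈ Set.Ioo xs μ, HasDerivAt f (f' x) x := by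
    intro x hx
    exact ((hfd x ⟨hx.1.le, hx.2⟩).hasDerivWithinAt).hasDerivAt
      (Ico_mem_nhds hx.1 hx.2)
  have hf''w : ∀ x ∈ s, HasDerivWithinAt f' ((2 / (x ^ 2 - μ ^ 2) + p ^ 2) * f x) s x := by
    intro x hx
    have h1 : HasDerivWithinAt f' (derivWithin f' s x) s x :=
      (hf1.differentiableOn (by norm_num) x hx).hasDerivWithinAt
    have h2 : derivWithin f' s x = iteratedDerivWithin 2 f s x := by
      rw [iteratedDerivWithin_succ]
      refine (derivWithin_congr (fun y hy => ?_) ?_).symm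
      · exact congrFun iteratedDerivWithin_one y
      · exact congrFun iteratedDerivWithin_one x
    rw [h2, hode x hx] at h1
    exact h1
  have hf''at : ∀ x ∈ Set.Ioo xs μ, HasDerivAt f' ((2 / (x ^ 2 - μ ^ 2) + p ^ 2) * f x) x := by
    intro x hx
    exact (hf''w x ⟨hx.1.le, hx.2⟩).hasDerivAt (Ico_mem_nhds hx.1 hx.2)
  -- the Wronskian-type function
  set W : ℝ → ℝ := fun x => f' x * (μ ^ 2 - x ^ 2) + 2 * x * f x with hWdef
  have hWc : ContinuousOn W s := by
    apply ContinuousOn.add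
    · exact hf'c.mul (continuous_const.sub (continuous_pow 2)).continuousOn
    · exact ((continuous_const.mul continuous_id).continuousOn).mul hfcs
  have hWat : ∀ x ∈ Set.Ioo xs μ, HasDerivAt W (p ^ 2 * f x * (μ ^ 2 - x ^ 2)) x := by
    intro x hx
    have hxne : x ^ 2 - μ ^ 2 ≠ 0 := by nlinarith [hx.1, hx.2]
    have h1 := hf'at x hx
    have h2 := hf''at x hx
    have hφ : HasDerivAt (fun y : ℝ => μ ^ 2 - y ^ 2) (-(2 * x ^ 1)) x :=
      (hasDerivAt_pow 2 x).const_sub (μ ^ 2)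
    have h2x : HasDerivAt (fun y : ℝ => 2 * y) 2 x := by
      simpa using (hasDerivAt_id x).const_mul (2 : ℝ)
    have hA := h2.mul hφ
    have hB := h2x.mul h1
    have := hA.add hB
    refine this.congr_deriv ?_
    have e : 2 / (x ^ 2 - μ ^ 2) * (μ ^ 2 - x ^ 2) = -2 := by
      rw [div_mul_eq_mul_div, div_eq_iff hxne]; ring
    linear_combination f x * e
  have hφpos : ∀ y : ℝ, xs ≤ y → y < μ → 0 < μ ^ 2 - y ^ 2 := by
    intro y h1 h2; nlinarith
  -- monotonicity of W where f ≥ 0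
  have hWmono : ∀ c, c ∈ s → (∀ y ∈ Set.Ioo xs c, 0 ≤ f y) →
      ∀ x ∈ Set.Icc xs c, W xs ≤ W x := by
    intro c hc hfy x hx
    have hsub : Set.Icc xs c ⊆ s := Set.Icc_subset_Ico_right hc.2
    have hmono : MonotoneOn W (Set.Icc xs c) := by
      apply monotoneOn_of_deriv_nonneg (convex_Icc _ _) (hWc.mono hsub)
      · intro y hy
        rw [interior_Icc] at hy
        exact ((hWat y ⟨hy.1, hy.2.trans hc.2⟩).differentiableAt).differentiableWithinAt
      · intro y hy
        rw [interior_Icc] at hy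
        have hy' : y ∈ Set.Ioo xs μ := ⟨hy.1, hy.2.trans hc.2⟩
        rw [(hWat y hy').deriv]
        have := hfy y hy
        have := hφpos y hy'.1.le hy'.2
        positivity
    exact hmono ⟨le_rfl, hx.1.trans hx.2⟩ hx hx.1
  have hWxs : 0 < W xs := by
    have : W xs = f' xs * (μ ^ 2 - xs ^ 2) := by simp [hWdef, hf0]
    rw [this]
    exact mul_pos hd (hφpos xs le_rfl hxsμ)
  clear_value W
  -- Step A: positivity just to the right of xs
  obtain ⟨a, haxs, haμ, hA⟩ : ∃ a, xs < a ∧ a < μ ∧ ∀ y, xs < y → y ≤ a → 0 < f y := by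
    have hcw : ContinuousWithinAt f' s xs := hf'c xs ⟨le_rfl, hxsμ⟩
    have hev : ∀ᶠ y in nhdsWithin xs s, 0 < f' y := hcw.eventually (eventually_gt_nhds hd)
    rw [hs, nhdsWithin_Ico_eq_nhdsGE hxsμ, Filter.eventually_iff] at hev
    obtain ⟨u, hu, hsub⟩ := mem_nhdsGE_iff_exists_Ico_subset.mp hev
    refine ⟨min ((xs + u) / 2) ((xs + μ) / 2), ?_, ?_, ?_⟩
    · simp only [lt_min_iff]
      constructor <;> [linarith [hu.out]; linarith]
    · exact (min_le_right _ _).trans_lt (by linarith)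
    · intro y hy1 hy2
      have hax : xs < min ((xs + u) / 2) ((xs + μ) / 2) := by
        simp only [lt_min_iff]; constructor <;> [linarith [hu.out]; linarith]
      have hsm : StrictMonoOn f (Set.Icc xs (min ((xs + u) / 2) ((xs + μ) / 2))) := by
        apply strictMonoOn_of_deriv_pos (convex_Icc _ _)
        · apply hfc.mono
          apply Set.Icc_subset_Icc le_rfl
          exact le_of_lt ((min_le_right _ _).trans_lt (by linarith))
        · intro z hz
          rw [interior_Icc] at hz
          have hzμ : z < μ := hz.2.trans_le ((min_le_right _ _).trans (by linarith))
          rw [(hf'at z ⟨hz.1, hzμ⟩).deriv]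
          apply hsub
          refine ⟨hz.1.le, ?_⟩
          exact hz.2.trans_le ((min_le_left _ _).trans (by linarith [hu.out]))
      have := hsm ⟨le_rfl, hax.le⟩ ⟨hy1.le, hy2⟩ hy1
      · rw [hf0] at this; exact this
  -- Step B: positivity on the open interval
  have stepB : ∀ x ∈ Set.Ioo xs μ, 0 < f x := by
    by_contra hcon
    push_neg at hcon
    obtain ⟨x, hx, hfx⟩ := hcon
    have hax : a < x := by
      by_contra hle
      push_neg at hle
      exact absurd (hA x hx.1 hle) (not_lt.mpr hfx)
    set Z : Set ℝ := Set.Icc a x ∩ f ⁻¹' Set.Iic 0 with hZ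
    have hZc : IsClosed Z := by
      apply ContinuousOn.preimage_isClosed_of_isClosed
        (hfc.mono (Set.Icc_subset_Icc haxs.le hx.2.le)) isClosed_Icc isClosed_Iic
    have hZne : Z.Nonempty := ⟨x, ⟨hax.le, le_rfl⟩, hfx⟩
    have hZbdd : BddBelow Z := ⟨a, fun z hz => hz.1.1⟩
    set x0 := sInf Z with hx0
    have hx0Z : x0 ∈ Z := hZc.csInf_mem hZne hZbdd
    have hax0 : a ≤ x0 := hx0Z.1.1
    have hx0x : x0 ≤ x := hx0Z.1.2
    have hx0μ : x0 < μ := hx0x.trans_lt hx.2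
    have hfx0 : f x0 ≤ 0 := hx0Z.2
    have hfpos : ∀ y ∈ Set.Ioo xs x0, 0 < f y := by
      intro y hy
      rcases le_or_gt y a with h | h
      · exact hA y hy.1 h
      · have hyZ : y ∉ Z := notMem_of_lt_csInf hy.2 hZbdd
        by_contra hfy
        push_neg at hfy
        exact hyZ ⟨⟨h.le, hy.2.le.trans hx0x⟩, hfy⟩
    have hWge := hWmono x0 ⟨haxs.le.trans hax0, hx0μ⟩ (fun y hy => (hfpos y hy).le)
    have hxsx0 : xs < x0 := haxs.trans_le hax0
    -- g = f / φ is strictly increasing on [xs, x0]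
    have hg : StrictMonoOn (fun y => f y / (μ ^ 2 - y ^ 2)) (Set.Icc xs x0) := by
      apply strictMonoOn_of_deriv_pos (convex_Icc _ _)
      · apply ContinuousOn.div (hfc.mono (Set.Icc_subset_Icc le_rfl hx0μ.le))
          ((continuous_const.sub (continuous_pow 2)).continuousOn)
        intro y hy
        exact ne_of_gt (hφpos y hy.1 (hy.2.trans_lt hx0μ))
      · intro y hy
        rw [interior_Icc] at hy
        have hy' : y ∈ Set.Ioo xs μ := ⟨hy.1, hy.2.trans hx0μ⟩
        have hφne : μ ^ 2 - y ^ 2 ≠ 0 := ne_of_gt (hφpos y hy'.1.le hy'.2)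
        have hφ : HasDerivAt (fun z : ℝ => μ ^ 2 - z ^ 2) (-(2 * y ^ 1)) y :=
          (hasDerivAt_pow 2 y).const_sub (μ ^ 2)
        have hD := (hf'at y hy').div hφ hφne
        rw [show (fun y => f y / (μ ^ 2 - y ^ 2)) = f / fun z => μ ^ 2 - z ^ 2 from rfl, hD.deriv]
        have hnum : f' y * (μ ^ 2 - y ^ 2) - f y * -(2 * y ^ 1) = W y := by
          simp [hWdef]; ring
        rw [hnum]
        have hWy : W xs ≤ W y := hWge y ⟨hy.1.le, hy.2.le⟩
        have : 0 < W y := lt_of_lt_of_le hWxs hWy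
        positivity
    have := hg ⟨le_rfl, hxsx0.le⟩ ⟨hxsx0.le, le_rfl⟩ hxsx0
    simp only [hf0, zero_div] at this
    have hφ0 : 0 < μ ^ 2 - x0 ^ 2 := hφpos x0 hxsx0.le hx0μ
    rcases div_pos_iff.mp this with ⟨h1, _⟩ | ⟨_, h2⟩
    · exact absurd h1 (not_lt.mpr hfx0)
    · linarith
  -- Step C: positivity at μ
  have stepC : 0 < f μ := by
    by_contra hfμ
    push_neg at hfμ
    have hWge : ∀ x ∈ s, W xs ≤ W x := by
      intro x hx
      exact hWmono x hx (fun y hy => (stepB y ⟨hy.1, hy.2.trans hx.2⟩).le) x ⟨hx.1, le_rfl⟩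
    have hcμ : ContinuousWithinAt f (Set.Icc xs μ) μ := hfc μ ⟨hxsμ.le, le_rfl⟩
    have hε : (0 : ℝ) < W xs / (4 * μ) := by positivity
    have hev : ∀ᶠ y in nhdsWithin μ (Set.Icc xs μ), f y < W xs / (4 * μ) :=
      hcμ.eventually (eventually_lt_nhds (by linarith))
    rw [nhdsWithin_Icc_eq_nhdsLE hxsμ, Filter.eventually_iff] at hev
    obtain ⟨l, hl, hsub⟩ := mem_nhdsLE_iff_exists_Ioc_subset.mp hev
    set x₂ := max ((l + μ) / 2) ((xs + μ) / 2) with hx₂def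
    have hx₂xs : xs < x₂ := lt_of_lt_of_le (by linarith) (le_max_right _ _)
    have hx₂μ : x₂ < μ := by
      apply max_lt <;> [linarith [hl.out]; linarith]
    have hlx₂ : l < x₂ := lt_of_lt_of_le (by linarith [hl.out]) (le_max_left _ _)
    have hsm : StrictMonoOn f (Set.Icc x₂ μ) := by
      apply strictMonoOn_of_deriv_pos (convex_Icc _ _)
        (hfc.mono (Set.Icc_subset_Icc hx₂xs.le le_rfl))
      intro y hy
      rw [interior_Icc] at hy
      have hy' : y ∈ Set.Ioo xs μ := ⟨hx₂xs.trans hy.1, hy.2⟩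
      rw [(hf'at y hy').deriv]
      have hWy : W xs ≤ W y := hWge y ⟨hy'.1.le, hy.2⟩
      have hfy : 0 < f y := stepB y hy'
      have hfyε : f y < W xs / (4 * μ) := hsub ⟨hlx₂.trans hy.1, hy.2.le⟩
      have hφ : 0 < μ ^ 2 - y ^ 2 := hφpos y hy'.1.le hy'.2
      have hypos : 0 < y := hxs.trans hy'.1
      have hyf : y * f y < μ * (W xs / (4 * μ)) :=
        mul_lt_mul'' hy'.2 hfyε hypos.le hfy.le
      have key : μ * (W xs / (4 * μ)) = W xs / 4 := by
        field_simp
      have hnum : 0 < f' y * (μ ^ 2 - y ^ 2) := by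
        have hWval : W y = f' y * (μ ^ 2 - y ^ 2) + 2 * (y * f y) := by
          simp only [hWdef]; ring
        linarith [hWxs]
      by_contra hcon
      push_neg at hcon
      have := mul_nonpos_of_nonpos_of_nonneg hcon hφ.le
      linarith
    have := hsm ⟨le_rfl, hx₂μ.le⟩ ⟨hx₂μ.le, le_rfl⟩ hx₂μ
    have hfx₂ : 0 < f x₂ := stepB x₂ ⟨hx₂xs, hx₂μ⟩
    linarith
  intro x hx hxμ
  rcases lt_or_eq_of_le hxμ with h | h
  · exact stepB x ⟨hx, h⟩
  · rw [h]; exact stepC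

/-- Interior-basepoint positivity for the left ODE `f'' = (2/(x²−μ²) + p²) f` on `[x*,μ)`
with `f(x*) = 0`: if `f'(x*) > 0` then `f > 0` on `(x*,μ]`, and if `f'(x*) < 0`
then `f < 0` on `(x*,μ]`. -/
theorem statement5 (μ p xs : ℝ) (hμ : 0 < μ) (hp : 0 < p) (hxs : 0 < xs) (hxsμ : xs < μ)
    (f : ℝ → ℝ)
    (hfc : ContinuousOn f (Set.Icc xs μ))
    (hf2 : ContDiffOn ℝ 2 f (Set.Ico xs μ))
    (hode : ∀ x ∈ Set.Ico xs μ,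
      iteratedDerivWithin 2 f (Set.Ico xs μ) x = (2 / (x ^ 2 - μ ^ 2) + p ^ 2) * f x)
    (hf0 : f xs = 0) :
    (0 < derivWithin f (Set.Ico xs μ) xs → ∀ x, xs < x → x ≤ μ → 0 < f x) ∧
    (derivWithin f (Set.Ico xs μ) xs < 0 → ∀ x, xs < x → x ≤ μ → f x < 0) := by
  constructor
  · exact statement5_aux μ p xs hμ hp hxs hxsμ f hfc hf2 hode hf0
  · intro hd x hx hxμ
    have hneg : ∀ y ∈ Set.Ico xs μ, iteratedDerivWithin 2 (fun z => -f z) (Set.Ico xs μ) y =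
        (2 / (y ^ 2 - μ ^ 2) + p ^ 2) * (-f y) := by
      intro y hy
      rw [iteratedDerivWithin_fun_neg f, hode y hy]
      ring
    have hd' : 0 < derivWithin (fun z => -f z) (Set.Ico xs μ) xs := by
      rw [derivWithin.fun_neg]
      linarith
    have := statement5_aux μ p xs hμ hp hxs hxsμ (fun z => -f z) hfc.neg hf2.neg hneg
      (by simp [hf0]) hd' x hx hxμ
    simpa using this
end

section
/- Let 0 ≤ ν < 1 and p > 0. Let f : [ν,1] → ℝ be continuous, twice continuously differentiable on (ν,1], and satisfy f''(x) = ( 2/(x²−ν²) + p² ) f(x) for all x ∈ (ν,1], with f(1) = 0 and f'(1) < 0. Then f(x) > 0 for all ν ≤ x < 1, and moreover f(x) ≥ |f'(1)| · sinh(p(1−x))/p for all ν ≤ x ≤ 1. -/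
/-- Positivity for the right ODE `f'' = (2/(x²−ν²) + p²) f` on `(ν,1]` with `f(1)=0`,
`f'(1)<0`: then `f > 0` on `[ν,1)` and `f(x) ≥ |f'(1)| · sinh(p(1−x))/p` on `[ν,1]`. -/
theorem statement6 (ν p : ℝ) (hν : 0 ≤ ν) (hν1 : ν < 1) (hp : 0 < p) (f : ℝ → ℝ)
    (hfc : ContinuousOn f (Set.Icc ν 1))
    (hf2 : ContDiffOn ℝ 2 f (Set.Ioc ν 1))
    (hode : ∀ x ∈ Set.Ioc ν (1:ℝ),
      iteratedDerivWithin 2 f (Set.Ioc ν 1) x = (2 / (x ^ 2 - ν ^ 2) + p ^ 2) * f x)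
    (hf1 : f 1 = 0) (hf'1 : derivWithin f (Set.Ioc ν 1) 1 < 0) :
    (∀ x, ν ≤ x → x < 1 → 0 < f x) ∧
    (∀ x ∈ Set.Icc ν (1:ℝ),
      |derivWithin f (Set.Ioc ν 1) 1| * (Real.sinh (p * (1 - x)) / p) ≤ f x) := by
  have hsu : UniqueDiffOn ℝ (Set.Ioc ν 1) := uniqueDiffOn_Ioc ν 1
  set s : Set ℝ := Set.Ioc ν 1 with hs
  set f' : ℝ → ℝ := fun x => derivWithin f s x with hf'def
  set f'' : ℝ → ℝ := fun x => iteratedDerivWithin 2 f s x with hf''def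
  have hsIcc : s ⊆ Set.Icc ν 1 := Set.Ioc_subset_Icc_self
  -- f' is C¹ on s
  have hf'C1 : ContDiffOn ℝ 1 f' s := hf2.derivWithin hsu (by norm_num)
  have hf'cont : ContinuousOn f' s := hf'C1.continuousOn
  have hf'diff : DifferentiableOn ℝ f' s := hf'C1.differentiableOn one_ne_zero
  have hfdiff : DifferentiableOn ℝ f s := hf2.differentiableOn two_ne_zero
  -- second derivative relation
  have hd2 : ∀ x ∈ s, derivWithin f' s x = f'' x := by
    intro x hx
    have hu := hsu x hx
    rw [hf''def]
    simp only
    rw [iteratedDerivWithin_succ]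
    apply derivWithin_congr
    · intro y hy
      exact congrFun iteratedDerivWithin_one.symm y
    · exact congrFun iteratedDerivWithin_one.symm x
  -- pointwise derivatives in the interior
  have hfd : ∀ x ∈ Set.Ioo ν 1, HasDerivAt f (f' x) x := by
    intro x hx
    have hmem : s ∈ nhds x := Ioc_mem_nhds hx.1 hx.2
    exact ((hfdiff x ⟨hx.1, hx.2.le⟩).hasDerivWithinAt).hasDerivAt hmem
  have hf'd : ∀ x ∈ Set.Ioo ν 1, HasDerivAt f' (f'' x) x := by
    intro x hx
    have hxs : x ∈ s := ⟨hx.1, hx.2.le⟩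
    have hmem : s ∈ nhds x := Ioc_mem_nhds hx.1 hx.2
    have := (hf'diff x hxs).hasDerivWithinAt
    rw [hd2 x hxs] at this
    exact this.hasDerivAt hmem
  have h1s : (1:ℝ) ∈ s := ⟨hν1, le_rfl⟩
  -- Step 1 : f > 0 on [ν,1)
  have step1 : ∀ x, ν ≤ x → x < 1 → 0 < f x := by
    by_contra hcon
    push_neg at hcon
    obtain ⟨x₁, hx₁ν, hx₁1, hfx₁⟩ := hcon
    -- find x₂ ∈ (x₁,1) with f x₂ > 0, from f'(1) < 0
    have hder : HasDerivWithinAt f (f' 1) s 1 := (hfdiff 1 h1s).hasDerivWithinAt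
    rw [hasDerivWithinAt_iff_tendsto_slope] at hder
    have hsd : s \ {1} = Set.Ioo ν 1 := Set.Ioc_sdiff_right
    rw [hsd] at hder
    haveI : (nhdsWithin (1:ℝ) (Set.Ioo ν 1)).NeBot := by
      refine mem_closure_iff_nhdsWithin_neBot.mp ?_
      rw [closure_Ioo hν1.ne]
      exact ⟨hν1.le, le_rfl⟩
    have hev1 : ∀ᶠ y in nhdsWithin (1:ℝ) (Set.Ioo ν 1), slope f 1 y < 0 :=
      hder (Iio_mem_nhds hf'1)
    have hev2 : ∀ᶠ y in nhdsWithin (1:ℝ) (Set.Ioo ν 1), x₁ < y :=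
      eventually_nhdsWithin_of_eventually_nhds (eventually_gt_nhds hx₁1)
    obtain ⟨x₂, hx₂slope, hx₂gt, hx₂mem⟩ :=
      (hev1.and (hev2.and (eventually_mem_nhdsWithin))).exists
    have hfx₂ : 0 < f x₂ := by
      have h1 : slope f 1 x₂ = (f x₂ - f 1) / (x₂ - 1) := slope_def_field f 1 x₂
      rw [h1, hf1, sub_zero] at hx₂slope
      have hlt : x₂ - 1 < 0 := by linarith [hx₂mem.2]
      by_contra h
      push_neg at h
      have : 0 ≤ f x₂ / (x₂ - 1) := div_nonneg_iff.mpr (Or.inr ⟨h, hlt.le⟩)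
      linarith
    -- largest "zero" below x₂ and smallest at/after x₂
    set Zm : Set ℝ := Set.Icc ν x₂ ∩ f ⁻¹' Set.Iic 0 with hZm
    set Zp : Set ℝ := Set.Icc x₂ 1 ∩ f ⁻¹' Set.Iic 0 with hZp
    have hx₂I : x₂ ∈ Set.Icc ν 1 := ⟨hx₂mem.1.le, hx₂mem.2.le⟩
    have hZmsub : Zm ⊆ Set.Icc ν 1 := fun y hy => ⟨hy.1.1, hy.1.2.trans hx₂I.2⟩
    have hZpsub : Zp ⊆ Set.Icc ν 1 := fun y hy => ⟨hx₂I.1.trans hy.1.1, hy.1.2⟩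
    have hZmclosed : IsClosed Zm := by
      have : ContinuousOn f (Set.Icc ν x₂) := hfc.mono (Set.Icc_subset_Icc_right hx₂I.2)
      exact this.preimage_isClosed_of_isClosed isClosed_Icc isClosed_Iic
    have hZpclosed : IsClosed Zp := by
      have : ContinuousOn f (Set.Icc x₂ 1) := hfc.mono (Set.Icc_subset_Icc_left hx₂I.1)
      exact this.preimage_isClosed_of_isClosed isClosed_Icc isClosed_Iic
    have hZmcpt : IsCompact Zm := (isCompact_Icc (a := ν) (b := x₂)).of_isClosed_subset
      hZmclosed (Set.inter_subset_left)
    have hZpcpt : IsCompact Zp := (isCompact_Icc (a := x₂) (b := 1)).of_isClosed_subset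
      hZpclosed (Set.inter_subset_left)
    have hZmne : Zm.Nonempty := ⟨x₁, ⟨⟨hx₁ν, hx₂gt.le⟩, hfx₁⟩⟩
    have hZpne : Zp.Nonempty := ⟨1, ⟨⟨hx₂mem.2.le, le_rfl⟩, by simp [hf1]⟩⟩
    set x₀ := sSup Zm with hx₀def
    set x₃ := sInf Zp with hx₃def
    have hx₀mem : x₀ ∈ Zm := hZmcpt.sSup_mem hZmne
    have hx₃mem : x₃ ∈ Zp := hZpcpt.sInf_mem hZpne
    have hx₀lt : x₀ < x₂ := lt_of_le_of_ne hx₀mem.1.2 (by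
      intro h; rw [h] at hx₀mem; exact absurd hx₀mem.2 (by simpa using hfx₂))
    have hx₃gt : x₂ < x₃ := lt_of_le_of_ne hx₃mem.1.1 (by
      intro h; rw [← h] at hx₃mem; exact absurd hx₃mem.2 (by simpa using hfx₂))
    have hx₀ν : ν ≤ x₀ := hx₀mem.1.1
    have hx₃1 : x₃ ≤ 1 := hx₃mem.1.2
    -- f > 0 on (x₀, x₃)
    have hfpos : ∀ y ∈ Set.Ioo x₀ x₃, 0 < f y := by
      intro y hy
      by_contra h
      push_neg at h
      rcases le_or_gt y x₂ with hc | hc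
      · have : y ∈ Zm := ⟨⟨hx₀ν.trans hy.1.le, hc⟩, h⟩
        exact absurd (le_csSup hZmcpt.bddAbove this) (not_le.mpr hy.1)
      · have : y ∈ Zp := ⟨⟨hc.le, hy.2.le.trans hx₃1⟩, h⟩
        exact absurd (csInf_le hZpcpt.bddBelow this) (not_le.mpr hy.2)
    -- convexity of f on [x₀, x₃]
    have hIoosub : Set.Ioo x₀ x₃ ⊆ Set.Ioo ν 1 := fun y hy =>
      ⟨lt_of_le_of_lt hx₀ν hy.1, lt_of_lt_of_le hy.2 hx₃1⟩
    have hderiv_eq : ∀ y ∈ Set.Ioo ν 1, deriv f y = f' y := fun y hy => (hfd y hy).deriv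
    have hd2' : ∀ y ∈ Set.Ioo x₀ x₃, HasDerivAt (deriv f) (f'' y) y := by
      intro y hy
      have hy' := hIoosub hy
      refine (hf'd y hy').congr_of_eventuallyEq ?_
      filter_upwards [isOpen_Ioo.mem_nhds hy'] with z hz
      exact hderiv_eq z hz
    have hconv : ConvexOn ℝ (Set.Icc x₀ x₃) f := by
      apply convexOn_of_deriv2_nonneg (convex_Icc _ _)
      · exact hfc.mono (Set.Icc_subset_Icc hx₀ν hx₃1)
      · rw [interior_Icc]
        intro y hy
        exact ((hfd y (hIoosub hy)).differentiableAt).differentiableWithinAt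
      · rw [interior_Icc]
        intro y hy
        exact ((hd2' y hy).differentiableAt).differentiableWithinAt
      · rw [interior_Icc]
        intro y hy
        have heq : deriv^[2] f y = f'' y := by
          simp only [Function.iterate_succ, Function.iterate_zero, Function.comp_apply, id]
          exact (hd2' y hy).deriv
        rw [heq]
        show 0 ≤ iteratedDerivWithin 2 f s y
        rw [hode y ⟨(hIoosub hy).1, (hIoosub hy).2.le⟩]
        have hy' := hIoosub hy
        have hysq : 0 < y ^ 2 - ν ^ 2 := by nlinarith [hy'.1, hν]
        have := hfpos y hy
        positivity
    -- contradiction by convexity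
    have hx₀x₃ : x₀ < x₃ := hx₀lt.trans hx₃gt
    have ha : 0 < (x₃ - x₂) / (x₃ - x₀) := by
      apply div_pos <;> linarith
    have hb : 0 < (x₂ - x₀) / (x₃ - x₀) := by
      apply div_pos <;> linarith
    have hab : (x₃ - x₂) / (x₃ - x₀) + (x₂ - x₀) / (x₃ - x₀) = 1 := by
      rw [← add_div]
      rw [show x₃ - x₂ + (x₂ - x₀) = x₃ - x₀ by ring]
      exact div_self (by linarith)
    have key := hconv.2 (Set.left_mem_Icc.mpr hx₀x₃.le) (Set.right_mem_Icc.mpr hx₀x₃.le)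
      ha.le hb.le hab
    simp only [smul_eq_mul] at key
    have hne : x₃ - x₀ ≠ 0 := by linarith
    have hcomb : (x₃ - x₂) / (x₃ - x₀) * x₀ + (x₂ - x₀) / (x₃ - x₀) * x₃ = x₂ := by
      field_simp
      ring
    rw [hcomb] at key
    have h0 : f x₀ ≤ 0 := hx₀mem.2
    have h3 : f x₃ ≤ 0 := hx₃mem.2
    nlinarith [key, mul_nonpos_of_nonneg_of_nonpos ha.le h0,
      mul_nonpos_of_nonneg_of_nonpos hb.le h3]
  -- Step 2 : the sinh lower bound
  set c : ℝ := -f' 1 with hcdef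
  have hc : 0 < c := by simp [hcdef]; exact hf'1
  -- U = G' + pG where G = p f - c sinh(p(1-x))
  set U : ℝ → ℝ := fun x =>
    p * f' x + c * p * Real.cosh (p * (1 - x)) + p * (p * f x - c * Real.sinh (p * (1 - x)))
    with hUdef
  have hlin : ∀ x : ℝ, HasDerivAt (fun y => p * (1 - y)) (-p) x := by
    intro x
    simpa using ((hasDerivAt_id x).const_sub 1).const_mul p
  have hsinh : ∀ x : ℝ, HasDerivAt (fun y => Real.sinh (p * (1 - y)))
      (-(p * Real.cosh (p * (1 - x)))) x := by
    intro x
    have := (Real.hasDerivAt_sinh (p * (1 - x))).comp x (hlin x)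
    exact this.congr_deriv (by ring)
  have hcosh : ∀ x : ℝ, HasDerivAt (fun y => Real.cosh (p * (1 - y)))
      (-(p * Real.sinh (p * (1 - x)))) x := by
    intro x
    have := (Real.hasDerivAt_cosh (p * (1 - x))).comp x (hlin x)
    exact this.congr_deriv (by ring)
  have hUd : ∀ x ∈ Set.Ioo ν 1, HasDerivAt U
      (p * f'' x + c * p * (-(p * Real.sinh (p * (1 - x))))
        + p * (p * f' x - c * (-(p * Real.cosh (p * (1 - x)))))) x := by
    intro x hx
    exact (((hf'd x hx).const_mul p).add ((hcosh x).const_mul (c * p))).add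
      ((((hfd x hx).const_mul p).sub ((hsinh x).const_mul c)).const_mul p)
  -- A = U * exp(-p x) is monotone on s
  set A : ℝ → ℝ := fun x => U x * Real.exp (-(p * x)) with hAdef
  have hexp : ∀ x : ℝ, HasDerivAt (fun y => Real.exp (-(p * y)))
      (-p * Real.exp (-(p * x))) x := by
    intro x
    have h1 : HasDerivAt (fun y : ℝ => -(p * y)) (-p) x := by
      exact ((hasDerivAt_id x).const_mul p).neg.congr_deriv (by ring)
    refine ((Real.hasDerivAt_exp (-(p * x))).comp x h1).congr_deriv ?_
    ring
  have hAd : ∀ x ∈ Set.Ioo ν 1, HasDerivAt A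
      ((p * (2 / (x ^ 2 - ν ^ 2)) * f x) * Real.exp (-(p * x))) x := by
    intro x hx
    have h := (hUd x hx).mul (hexp x)
    have hxs : x ∈ s := ⟨hx.1, hx.2.le⟩
    have hode' := hode x hxs
    refine h.congr_deriv ?_
    rw [hUdef]
    simp only
    rw [show f'' x = (2 / (x ^ 2 - ν ^ 2) + p ^ 2) * f x from hode']
    ring
  have hAcont : ContinuousOn A s := by
    apply ContinuousOn.mul _ (Real.continuous_exp.comp (by fun_prop)).continuousOn
    apply ContinuousOn.add
    apply ContinuousOn.add
    · exact hf'cont.const_smul (p:ℝ)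
    · exact ((Real.continuous_cosh.comp (by fun_prop)).continuousOn).const_smul (c * p)
    · exact (((hfc.mono hsIcc).const_smul (p:ℝ)).sub
        (((Real.continuous_sinh.comp (by fun_prop)).continuousOn).const_smul c)).const_smul (p:ℝ)
  have hAmono : MonotoneOn A s := by
    apply monotoneOn_of_deriv_nonneg (convex_Ioc ν 1) hAcont
    · rw [interior_Ioc]
      intro x hx
      exact (hAd x hx).differentiableAt.differentiableWithinAt
    · rw [interior_Ioc]
      intro x hx
      rw [(hAd x hx).deriv]
      have hxsq : 0 < x ^ 2 - ν ^ 2 := by nlinarith [hx.1, hν]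
      have hfx : 0 < f x := step1 x hx.1.le hx.2
      positivity
  have hA1 : A 1 = 0 := by
    rw [hAdef, hUdef]
    simp [hf1, hcdef]
    ring
  have hUnonpos : ∀ x ∈ s, U x ≤ 0 := by
    intro x hx
    have := hAmono hx h1s hx.2
    rw [hA1] at this
    have hex : 0 < Real.exp (-(p * x)) := Real.exp_pos _
    have h2 : U x * Real.exp (-(p * x)) ≤ 0 := this
    exact le_of_not_gt fun h => absurd h2 (not_le.mpr (mul_pos h hex))
  -- B = (p f - c sinh(p(1-x))) * exp(p x) is antitone on [ν, 1]
  set B : ℝ → ℝ := fun x => (p * f x - c * Real.sinh (p * (1 - x))) * Real.exp (p * x)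
    with hBdef
  have hexp2 : ∀ x : ℝ, HasDerivAt (fun y => Real.exp (p * y)) (p * Real.exp (p * x)) x := by
    intro x
    have h1 : HasDerivAt (fun y : ℝ => p * y) p x := by
      simpa using (hasDerivAt_id x).const_mul p
    exact ((Real.hasDerivAt_exp (p * x)).comp x h1).congr_deriv (by ring)
  have hBd : ∀ x ∈ Set.Ioo ν 1, HasDerivAt B (U x * Real.exp (p * x)) x := by
    intro x hx
    have h := ((((hfd x hx).const_mul p).sub ((hsinh x).const_mul c))).mul (hexp2 x)
    refine h.congr_deriv ?_
    rw [hUdef]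
    simp only [Pi.sub_apply]
    ring
  have hBcont : ContinuousOn B (Set.Icc ν 1) := by
    apply ContinuousOn.mul _ (Real.continuous_exp.comp (by fun_prop)).continuousOn
    exact (hfc.const_smul (p:ℝ)).sub
      (((Real.continuous_sinh.comp (by fun_prop)).continuousOn).const_smul c)
  have hBanti : AntitoneOn B (Set.Icc ν 1) := by
    apply antitoneOn_of_deriv_nonpos (convex_Icc ν 1) hBcont
    · rw [interior_Icc]
      intro x hx
      exact (hBd x hx).differentiableAt.differentiableWithinAt
    · rw [interior_Icc]
      intro x hx
      rw [(hBd x hx).deriv]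
      have hU := hUnonpos x ⟨hx.1, hx.2.le⟩
      have hex : 0 < Real.exp (p * x) := Real.exp_pos _
      exact mul_nonpos_of_nonpos_of_nonneg hU hex.le
  have hB1 : B 1 = 0 := by
    rw [hBdef]
    simp [hf1]
  refine ⟨step1, ?_⟩
  intro x hx
  have hBx := hBanti hx ⟨hν1.le, le_rfl⟩ hx.2
  rw [hB1] at hBx
  have hex : 0 < Real.exp (p * x) := Real.exp_pos _
  have h2 : 0 ≤ (p * f x - c * Real.sinh (p * (1 - x))) * Real.exp (p * x) := hBx
  have hG : 0 ≤ p * f x - c * Real.sinh (p * (1 - x)) :=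
    le_of_not_gt fun h => absurd h2 (not_le.mpr (mul_neg_of_neg_of_pos h hex))
  have habs : |derivWithin f s 1| = c := by
    rw [abs_of_neg hf'1]
  calc |derivWithin f s 1| * (Real.sinh (p * (1 - x)) / p)
      = c * Real.sinh (p * (1 - x)) / p := by rw [habs, mul_div_assoc]
    _ ≤ p * f x / p := by
        apply div_le_div_of_nonneg_right ?_ hp.le
        linarith
    _ = f x := by field_simp
end

section
/- Let 0 ≤ ν < 1, p > 0 and ν < x* < 1. Let f : [ν,x*] → ℝ be continuous, twice continuously differentiable on (ν,x*], and satisfy f''(x) = ( 2/(x²−ν²) + p² ) f(x) for all x ∈ (ν,x*], with f(x*) = 0 and f'(x*) > 0. Then f(x) < 0 for all ν ≤ x < x*. (Likewise, if f'(x*) < 0 then f(x) > 0 for all ν ≤ x < x*.) -/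
open Set Filter Topology

lemma iterDW_nhds {f : ℝ → ℝ} {s : Set ℝ} {x : ℝ} {n : ℕ} (h : s ∈ 𝓝 x) :
    iteratedDerivWithin n f s x = iteratedDeriv n f x := by
  rw [iteratedDerivWithin_eq_iteratedFDerivWithin, iteratedDeriv_eq_iteratedFDeriv,
    iteratedFDerivWithin_congr_set (t := (univ : Set ℝ)) ?_ n, iteratedFDerivWithin_univ]
  filter_upwards [h] with y hy
  exact propext (iff_of_true hy trivial)

lemma aux (ν p xs : ℝ) (hν : 0 ≤ ν) (hp : 0 < p) (hxsl : ν < xs)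
    (f : ℝ → ℝ) (hfc : ContinuousOn f (Set.Icc ν xs))
    (hf2 : ContDiffOn ℝ 2 f (Set.Ioc ν xs))
    (hode : ∀ x ∈ Set.Ioc ν xs,
      iteratedDerivWithin 2 f (Set.Ioc ν xs) x = (2 / (x ^ 2 - ν ^ 2) + p ^ 2) * f x)
    (hf0 : f xs = 0) (hd : 0 < derivWithin f (Set.Ioc ν xs) xs) :
    ∀ x, ν ≤ x → x < xs → f x < 0 := by
  have hq : ∀ x ∈ Set.Ioc ν xs, 0 < 2 / (x ^ 2 - ν ^ 2) + p ^ 2 := by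
    intro x hx
    have h1 : ν ^ 2 < x ^ 2 := by nlinarith [hx.1]
    have : 0 < 2 / (x ^ 2 - ν ^ 2) := div_pos (by norm_num) (by linarith)
    nlinarith
  -- eventually f < 0 to the left of xs
  have hdiff : DifferentiableWithinAt ℝ f (Set.Ioc ν xs) xs :=
    (hf2.differentiableOn (by norm_num)) xs ⟨hxsl, le_refl _⟩
  have hslope : Tendsto (slope f xs) (𝓝[<] xs) (𝓝 (derivWithin f (Set.Ioc ν xs) xs)) := by
    have h := hasDerivWithinAt_iff_tendsto_slope.1 hdiff.hasDerivWithinAt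
    have hset : Set.Ioc ν xs \ {xs} = Set.Ioo ν xs := by
      ext y; simp only [mem_diff, mem_Ioc, mem_singleton_iff, mem_Ioo]
      constructor
      · rintro ⟨⟨h1, h2⟩, h3⟩; exact ⟨h1, lt_of_le_of_ne h2 h3⟩
      · rintro ⟨h1, h2⟩; exact ⟨⟨h1, h2.le⟩, h2.ne⟩
    rwa [hset, nhdsWithin_Ioo_eq_nhdsLT hxsl] at h
  have hev : ∀ᶠ x in 𝓝[<] xs, f x < 0 := by
    filter_upwards [hslope.eventually (lt_mem_nhds hd), self_mem_nhdsWithin] with x hx hx'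
    rw [slope_def_field, hf0, sub_zero] at hx
    by_contra hfx
    have : f x / (x - xs) ≤ 0 :=
      div_nonpos_of_nonneg_of_nonpos (not_lt.1 hfx) (by simpa using (hx' : x < xs).le)
    linarith
  intro x0 hx0l hx0r
  by_contra hfx0
  push_neg at hfx0
  -- a point t in (x0, xs) with f t < 0
  obtain ⟨t, ht, htx0, htxs⟩ : ∃ t, f t < 0 ∧ x0 < t ∧ t < xs := by
    have h2 : ∀ᶠ x in 𝓝[<] xs, x0 < x :=
      eventually_nhdsWithin_of_eventually_nhds (eventually_gt_nhds hx0r)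
    have h3 : ∀ᶠ x in 𝓝[<] xs, x < xs := eventually_mem_nhdsWithin
    exact ((hev.and (h2.and h3)).exists).imp fun t ⟨a, b, c⟩ => ⟨a, b, c⟩
  -- minimum on [x0, xs]
  obtain ⟨m, hm, hmin⟩ : ∃ m ∈ Set.Icc x0 xs, IsMinOn f (Set.Icc x0 xs) m :=
    (isCompact_Icc).exists_isMinOn (nonempty_Icc.2 hx0r.le)
      (hfc.mono (Icc_subset_Icc hx0l le_rfl))
  have hfm : f m < 0 := lt_of_le_of_lt (hmin ⟨htx0.le, htxs.le⟩) ht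
  have hmne1 : x0 < m := lt_of_le_of_ne hm.1 (by rintro rfl; linarith)
  have hmne2 : m < xs := lt_of_le_of_ne hm.2 (by rintro rfl; rw [hf0] at hfm; linarith)
  have hmν : ν < m := lt_of_le_of_lt hx0l hmne1
  have hnbhd : Set.Ioc ν xs ∈ 𝓝 m := Ioc_mem_nhds hmν hmne2
  have hlocmin : IsLocalMin f m := hmin.isLocalMin (Icc_mem_nhds hmne1 hmne2)
  have hca : ContDiffAt ℝ 2 f m := hf2.contDiffAt hnbhd
  have hderiv0 : deriv f m = 0 :=
    hlocmin.deriv_eq_zero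
  -- f < 0 on a right neighborhood [m, b]
  obtain ⟨ε, hε, hball⟩ : ∃ ε > 0, ∀ y, dist y m < ε → f y < 0 := by
    have := Metric.eventually_nhds_iff.1
      ((hca.continuousAt).eventually_lt (g := fun _ => (0:ℝ)) continuousAt_const hfm)
    obtain ⟨ε, hε, h⟩ := this
    exact ⟨ε, hε, fun y hy => h hy⟩
  set b := min (m + ε / 2) ((m + xs) / 2) with hb
  have hmb : m < b := lt_min (by linarith) (by linarith)
  have hbxs : b < xs := lt_of_le_of_lt (min_le_right _ _) (by linarith)
  have hbmε : b - m < ε := by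
    have : b ≤ m + ε / 2 := min_le_left _ _
    linarith
  have hfneg : ∀ x ∈ Set.Icc m b, f x < 0 := by
    intro x hx
    apply hball
    rw [Real.dist_eq, abs_of_nonneg (by linarith [hx.1])]
    linarith [hx.2]
  have hIccsub : Set.Icc m b ⊆ Set.Ioo ν xs := fun x hx => ⟨lt_of_lt_of_le hmν hx.1,
    lt_of_le_of_lt hx.2 hbxs⟩
  -- deriv f is continuous on Ioo ν xs, and deriv (deriv f) = q * f there
  have hf2' : ContDiffOn ℝ 2 f (Set.Ioo ν xs) := hf2.mono Ioo_subset_Ioc_self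
  have hcd : ContinuousOn (deriv f) (Set.Ioo ν xs) :=
    hf2'.continuousOn_deriv_of_isOpen isOpen_Ioo (by norm_num)
  have hdd : ∀ x ∈ Set.Ioo ν xs, deriv (deriv f) x = (2 / (x ^ 2 - ν ^ 2) + p ^ 2) * f x := by
    intro x hx
    have h1 : iteratedDerivWithin 2 f (Set.Ioc ν xs) x = iteratedDeriv 2 f x :=
      iterDW_nhds (Ioc_mem_nhds hx.1 hx.2)
    have h2 : iteratedDeriv 2 f x = deriv (deriv f) x := by
      rw [show (2:ℕ) = 1 + 1 from rfl, iteratedDeriv_succ, iteratedDeriv_one]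
    rw [← h2, ← h1]
    exact hode x ⟨hx.1, hx.2.le⟩
  -- deriv f strictly decreasing on [m, b]
  have hanti : StrictAntiOn (deriv f) (Set.Icc m b) := by
    apply strictAntiOn_of_deriv_neg (convex_Icc m b) (hcd.mono hIccsub)
    intro x hx
    rw [interior_Icc] at hx
    have hx' : x ∈ Set.Icc m b := ⟨hx.1.le, hx.2.le⟩
    rw [hdd x (hIccsub hx')]
    exact mul_neg_of_pos_of_neg (hq x ⟨(hIccsub hx').1, (hIccsub hx').2.le⟩) (hfneg x hx')
  have hderivneg : ∀ x ∈ Set.Ioo m b, deriv f x < 0 := by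
    intro x hx
    have := hanti ⟨le_rfl, hmb.le⟩ ⟨hx.1.le, hx.2.le⟩ hx.1
    rwa [hderiv0] at this
  -- so f strictly decreasing on [m, b]; contradiction with minimality
  have hfanti : StrictAntiOn f (Set.Icc m b) := by
    apply strictAntiOn_of_deriv_neg (convex_Icc m b)
      (hfc.mono (fun x hx => ⟨hmν.le.trans hx.1, hx.2.trans hbxs.le⟩))
    · intro x hx
      rw [interior_Icc] at hx
      exact hderivneg x hx
  have : f b < f m := hfanti ⟨le_rfl, hmb.le⟩ ⟨hmb.le, le_rfl⟩ hmb
  have : f m ≤ f b := hmin ⟨hmne1.le.trans hmb.le, hbxs.le⟩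
  linarith

/-- Interior-basepoint positivity for the right ODE `f'' = (2/(x²−ν²) + p²) f` on `(ν,x*]`
with `f(x*) = 0`: if `f'(x*) > 0` then `f < 0` on `[ν,x*)`, and if `f'(x*) < 0`
then `f > 0` on `[ν,x*)`. -/
theorem statement7 (ν p xs : ℝ) (hν : 0 ≤ ν) (hν1 : ν < 1) (hp : 0 < p)
    (hxsl : ν < xs) (hxsr : xs < 1) (f : ℝ → ℝ)
    (hfc : ContinuousOn f (Set.Icc ν xs))
    (hf2 : ContDiffOn ℝ 2 f (Set.Ioc ν xs))
    (hode : ∀ x ∈ Set.Ioc ν xs,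
      iteratedDerivWithin 2 f (Set.Ioc ν xs) x = (2 / (x ^ 2 - ν ^ 2) + p ^ 2) * f x)
    (hf0 : f xs = 0) :
    (0 < derivWithin f (Set.Ioc ν xs) xs → ∀ x, ν ≤ x → x < xs → f x < 0) ∧
    (derivWithin f (Set.Ioc ν xs) xs < 0 → ∀ x, ν ≤ x → x < xs → 0 < f x) := by
  constructor
  · intro hd
    exact aux ν p xs hν hp hxsl f hfc hf2 hode hf0 hd
  · intro hd
    have hu : UniqueDiffOn ℝ (Set.Ioc ν xs) := uniqueDiffOn_Ioc ν xs
    have hode' : ∀ x ∈ Set.Ioc ν xs,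
        iteratedDerivWithin 2 (-f) (Set.Ioc ν xs) x
          = (2 / (x ^ 2 - ν ^ 2) + p ^ 2) * (-f) x := by
      intro x hx
      rw [iteratedDerivWithin_neg f, hode x hx]
      simp only [Pi.neg_apply]
      ring
    have hd' : 0 < derivWithin (-f) (Set.Ioc ν xs) xs := by
      rw [show (-f) = (fun y => -(f y)) from rfl, show derivWithin (fun y => -(f y)) (Set.Ioc ν xs) xs = -derivWithin f (Set.Ioc ν xs) xs from derivWithin.neg]
      linarith
    have := aux ν p xs hν hp hxsl (-f) hfc.neg hf2.neg hode'
      (by simp [hf0]) hd'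
    intro x hx1 hx2
    have h := this x hx1 hx2
    simpa using h
end

section
/- Let μ > 1/2 and p > 0. If f ∈ C²([0,1/2]) satisfies f''(x) = ( 2/(x²−μ²) + p² ) f(x) for all x ∈ [0,1/2] and f(0) = 0 = f(1/2), then f(x) = 0 for all x ∈ [0,1/2]. -/
/-- Uniqueness for the Dirichlet problem on `[0,1/2]`: if `μ > 1/2`, `p > 0` and
`f ∈ C²([0,1/2])` satisfies `f'' = (2/(x²−μ²) + p²) f` with `f(0) = f(1/2) = 0`,
then `f ≡ 0` on `[0,1/2]`. -/
theorem statement8 (μ p : ℝ) (hμ : 1 / 2 < μ) (hp : 0 < p) (f : ℝ → ℝ)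
    (hf : ContDiffOn ℝ 2 f (Set.Icc 0 (1 / 2)))
    (hode : ∀ x ∈ Set.Icc (0:ℝ) (1 / 2),
      iteratedDerivWithin 2 f (Set.Icc 0 (1 / 2)) x = (2 / (x ^ 2 - μ ^ 2) + p ^ 2) * f x)
    (h0 : f 0 = 0) (h12 : f (1 / 2) = 0) :
    ∀ x ∈ Set.Icc (0:ℝ) (1 / 2), f x = 0 := by
  set s : Set ℝ := Set.Icc 0 (1 / 2) with hs_def
  have hs : UniqueDiffOn ℝ s := uniqueDiffOn_Icc (by norm_num)
  have hμ0 : ∀ x ∈ s, x ^ 2 - μ ^ 2 < 0 := by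
    intro x hx
    have h1 : (0:ℝ) ≤ x := hx.1
    have h2 : x ≤ 1 / 2 := hx.2
    nlinarith
  set f1 : ℝ → ℝ := derivWithin f s with hf1_def
  have hf1 : ContDiffOn ℝ 1 f1 s := hf.derivWithin hs (by norm_num)
  have hfd : ∀ x ∈ s, HasDerivWithinAt f (f1 x) s x := fun x hx =>
    ((hf.differentiableOn (by norm_num)) x hx).hasDerivWithinAt
  have hf1d : ∀ x ∈ s, HasDerivWithinAt f1 ((2 / (x ^ 2 - μ ^ 2) + p ^ 2) * f x) s x := by
    intro x hx
    have h2 : iteratedDerivWithin 2 f s x = derivWithin f1 s x := by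
      rw [show (2:ℕ) = 1 + 1 from rfl, iteratedDerivWithin_succ]
      apply derivWithin_congr
      · intro y hy
        exact congrFun iteratedDerivWithin_one y
      · exact congrFun iteratedDerivWithin_one x
    have h3 := ((hf1.differentiableOn one_ne_zero) x hx).hasDerivWithinAt
    rw [← h2, hode x hx] at h3
    exact h3
  set F : ℝ → ℝ := fun x => f x * f1 x - 2 * x * (f x) ^ 2 / (x ^ 2 - μ ^ 2) with hF_def
  have hFd : ∀ x ∈ s, HasDerivWithinAt F
      ((f1 x - 2 * x * f x / (x ^ 2 - μ ^ 2)) ^ 2 + p ^ 2 * (f x) ^ 2) s x := by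
    intro x hx
    have hv : x ^ 2 - μ ^ 2 ≠ 0 := (hμ0 x hx).ne
    have h1 := (hfd x hx).mul (hf1d x hx)
    have h2 := ((((hasDerivWithinAt_id x s).const_mul 2).mul ((hfd x hx).pow 2)).div
      (((hasDerivWithinAt_id x s).pow 2).sub_const (μ ^ 2)) hv)
    have h3 := h1.sub h2
    convert h3 using 1
    · rfl
    · rfl
    · rfl
    simp only [Pi.pow_apply, Pi.mul_apply, id]
    field_simp
    ring
  have hFc : ContinuousOn F s := fun x hx => (hFd x hx).differentiableWithinAt.continuousWithinAt
  have hint : interior s = Set.Ioo 0 (1 / 2) := interior_Icc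
  have hFda : ∀ x ∈ interior s, HasDerivAt F
      ((f1 x - 2 * x * f x / (x ^ 2 - μ ^ 2)) ^ 2 + p ^ 2 * (f x) ^ 2) x := by
    intro x hx
    exact (hFd x (interior_subset hx)).hasDerivAt (mem_interior_iff_mem_nhds.mp hx)
  have hmono : MonotoneOn F s := by
    apply monotoneOn_of_deriv_nonneg (convex_Icc _ _) hFc
    · intro x hx
      exact (hFda x hx).differentiableAt.differentiableWithinAt
    · intro x hx
      rw [(hFda x hx).deriv]
      positivity
  have hF0 : F 0 = 0 := by simp [hF_def, h0]
  have hF12 : F (1 / 2) = 0 := by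
    simp only [hF_def]
    rw [h12]
    ring
  have hFzero : ∀ x ∈ s, F x = 0 := by
    intro x hx
    have h1 : F 0 ≤ F x := hmono (Set.left_mem_Icc.mpr (by norm_num)) hx hx.1
    have h2 : F x ≤ F (1 / 2) := hmono hx (Set.right_mem_Icc.mpr (by norm_num)) hx.2
    rw [hF0] at h1; rw [hF12] at h2; linarith
  intro x hx
  rcases eq_or_lt_of_le hx.1 with h | hlt
  · rw [← h]; exact h0
  rcases eq_or_lt_of_le hx.2 with h | hlt2
  · rw [h]; exact h12
  -- x is interior
  have hxint : x ∈ interior s := by rw [hint]; exact ⟨hlt, hlt2⟩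
  have hnhds : s ∈ nhds x := mem_interior_iff_mem_nhds.mp hxint
  have hFeq : F =ᶠ[nhds x] (fun _ => (0:ℝ)) := by
    filter_upwards [hnhds] with y hy using hFzero y hy
  have hzero := (hasDerivAt_const x (0:ℝ)).congr_of_eventuallyEq hFeq
  have := (hFda x hxint).unique hzero
  have hsq : (f1 x - 2 * x * f x / (x ^ 2 - μ ^ 2)) ^ 2 ≥ 0 := sq_nonneg _
  have hpf : p ^ 2 * (f x) ^ 2 = 0 := by nlinarith [sq_nonneg (f x)]
  have : (f x) ^ 2 = 0 := by
    have hp2 : p ^ 2 ≠ 0 := by positivity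
    exact (mul_eq_zero.mp hpf).resolve_left hp2
  exact pow_eq_zero_iff (n := 2) (by norm_num) |>.mp this
end

section
/- Let ε ∈ (0,1), μ > 1/2 and let n₁ < n₂ be positive integers. For i = 1,2 let f_i ∈ C²([0,1/2]) satisfy f_i''(x) = ( 2/(x²−μ²) + (1−ε)² n_i² ) f_i(x) for all x ∈ [0,1/2], with f_i(0) = 0 and f_i(1/2) = 1. Then f₁(x) > f₂(x) for all x ∈ (0,1/2), and both f₁ and f₂ are strictly positive on (0,1/2]. -/
open Set Real Topology Filter

/-- Positivity lemma: solutions of `f'' = (2/(x²-μ²) + c) f` on `[0,1/2]` with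
`f 0 = 0`, `f (1/2) = 1`, `c > 0`, `μ > 1/2` are positive on `(0,1/2]`. -/
lemma key_pos (μ c : ℝ) (hμ : 1 / 2 < μ) (hc : 0 < c) (f : ℝ → ℝ)
    (hf : ContDiffOn ℝ 2 f (Set.Icc 0 (1 / 2)))
    (hode : ∀ x ∈ Set.Icc (0:ℝ) (1 / 2),
      iteratedDerivWithin 2 f (Set.Icc 0 (1 / 2)) x = (2 / (x ^ 2 - μ ^ 2) + c) * f x)
    (h0 : f 0 = 0) (h12 : f (1 / 2) = 1) :
    ∀ x ∈ Set.Ioc (0:ℝ) (1 / 2), 0 < f x := by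
  have hI : UniqueDiffOn ℝ (Icc (0:ℝ) (1/2)) := uniqueDiffOn_Icc (by norm_num)
  have hμ0 : (0:ℝ) < μ := lt_trans (by norm_num) hμ
  have hh : ∀ x ∈ Icc (0:ℝ) (1/2), 0 < μ^2 - x^2 := by
    intro x hx
    have h1 : x < μ := lt_of_le_of_lt hx.2 hμ
    nlinarith [hx.1]
  have hne : ∀ x ∈ Icc (0:ℝ) (1/2), x^2 - μ^2 ≠ 0 := by
    intro x hx
    have := hh x hx; intro h; nlinarith
  set F' : ℝ → ℝ := fun x => derivWithin f (Icc 0 (1/2)) x with hF'def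
  set F'' : ℝ → ℝ := fun x => derivWithin F' (Icc 0 (1/2)) x with hF''def
  have hder1 : ∀ x ∈ Icc (0:ℝ) (1/2), HasDerivWithinAt f (F' x) (Icc 0 (1/2)) x :=
    fun x hx => ((hf.differentiableOn (by norm_num)) x hx).hasDerivWithinAt
  have hcd1 : ContDiffOn ℝ 1 F' (Icc 0 (1/2)) := hf.derivWithin hI (by norm_num)
  have hder2 : ∀ x ∈ Icc (0:ℝ) (1/2), HasDerivWithinAt F' (F'' x) (Icc 0 (1/2)) x :=
    fun x hx => ((hcd1.differentiableOn (by norm_num)) x hx).hasDerivWithinAt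
  have hF'' : ∀ x ∈ Icc (0:ℝ) (1/2), F'' x = (2 / (x ^ 2 - μ ^ 2) + c) * f x := by
    intro x hx
    rw [← hode x hx]
    have h2 : iteratedDerivWithin 2 f (Icc 0 (1/2)) x
        = derivWithin (iteratedDerivWithin 1 f (Icc 0 (1/2))) (Icc 0 (1/2)) x :=
      congrFun iteratedDerivWithin_succ x
    rw [h2]
    apply (derivWithin_congr (fun y hy => congrFun iteratedDerivWithin_one y)
      (congrFun iteratedDerivWithin_one x)).symm
  -- W = Wronskian of f with h(x) = μ² - x²
  set W : ℝ → ℝ := fun x => F' x * (μ^2 - x^2) + f x * (2*x) with hWdef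
  set g : ℝ → ℝ := fun x => f x / (μ^2 - x^2) with hgdef
  have hpoly : ∀ x : ℝ, HasDerivAt (fun y : ℝ => μ^2 - y^2) (-(2*x)) x := by
    intro x
    simpa using ((hasDerivAt_pow 2 x).const_sub (μ^2))
  have hp2 : ∀ x : ℝ, HasDerivAt (fun y : ℝ => 2*y) 2 x := by
    intro x; simpa using (hasDerivAt_id x).const_mul 2
  have hW : ∀ x ∈ Icc (0:ℝ) (1/2),
      HasDerivWithinAt W (c * ((μ^2 - x^2) * f x)) (Icc 0 (1/2)) x := by
    intro x hx
    have h1 := ((hder2 x hx).mul ((hpoly x).hasDerivWithinAt)).add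
      ((hder1 x hx).mul ((hp2 x).hasDerivWithinAt))
    refine HasDerivWithinAt.congr_deriv h1 ?_
    rw [hF'' x hx]
    have := hne x hx
    field_simp
    ring
  have hg : ∀ x ∈ Icc (0:ℝ) (1/2),
      HasDerivWithinAt g (W x / (μ^2 - x^2)^2) (Icc 0 (1/2)) x := by
    intro x hx
    have h1 := (hder1 x hx).div ((hpoly x).hasDerivWithinAt) (ne_of_gt (hh x hx))
    refine HasDerivWithinAt.congr_deriv h1 ?_
    ring
  have hcontf : ContinuousOn f (Icc 0 (1/2)) := hf.continuousOn
  have hcontF' : ContinuousOn F' (Icc 0 (1/2)) := hcd1.continuousOn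
  have hcontW : ContinuousOn W (Icc 0 (1/2)) := by
    exact (hcontF'.mul (Continuous.continuousOn (continuous_const.sub (continuous_pow 2)))).add
      (hcontf.mul (Continuous.continuousOn (continuous_const.mul continuous_id)))
  have hcontg : ContinuousOn g (Icc 0 (1/2)) :=
    hcontf.div (Continuous.continuousOn (continuous_const.sub (continuous_pow 2))) (fun x hx => ne_of_gt (hh x hx))
  have hg0 : g 0 = 0 := by simp [hgdef, h0]
  have hmem : (0:ℝ) ∈ Icc (0:ℝ) (1/2) := by constructor <;> norm_num
  have hmem2 : (1/2:ℝ) ∈ Icc (0:ℝ) (1/2) := by constructor <;> norm_num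
  have hg12 : 0 < g (1/2) := by
    rw [hgdef]; simp only [h12]
    have := hh (1/2) hmem2
    positivity
  -- Step 1 : f is nonnegative on [0,1/2]
  have hfnn : ∀ x ∈ Icc (0:ℝ) (1/2), 0 ≤ f x := by
    by_contra hcon
    push_neg at hcon
    obtain ⟨y₀, hy₀I, hy₀⟩ := hcon
    obtain ⟨x₀, hx₀I, hmin⟩ := isCompact_Icc.exists_isMinOn
      (nonempty_Icc.2 (by norm_num)) hcontg
    have hgx₀ : g x₀ < 0 :=
      lt_of_le_of_lt (hmin hy₀I) (div_neg_of_neg_of_pos hy₀ (hh _ hy₀I))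
    have hx₀Ioo : x₀ ∈ Ioo (0:ℝ) (1/2) := by
      rcases eq_or_lt_of_le hx₀I.1 with h | h
      · exfalso; rw [← h, hg0] at hgx₀; exact lt_irrefl 0 hgx₀
      rcases eq_or_lt_of_le hx₀I.2 with h2 | h2
      · exfalso; rw [h2] at hgx₀; linarith
      exact ⟨h, h2⟩
    have hnh : Icc (0:ℝ) (1/2) ∈ 𝓝 x₀ := Icc_mem_nhds hx₀Ioo.1 hx₀Ioo.2
    have hW0 : W x₀ = 0 := by
      have hdg : HasDerivAt g (W x₀ / (μ^2 - x₀^2)^2) x₀ := (hg x₀ hx₀I).hasDerivAt hnh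
      have hz := (hmin.isLocalMin hnh).hasDerivAt_eq_zero hdg
      rcases div_eq_zero_iff.1 hz with h | h
      · exact h
      · exact absurd h (pow_ne_zero 2 (ne_of_gt (hh x₀ hx₀I)))
    have hfx₀ : f x₀ < 0 := by
      by_contra hge
      push_neg at hge
      exact absurd (div_nonneg hge (le_of_lt (hh x₀ hx₀I))) (not_le.2 hgx₀)
    -- the last zero of f before x₀
    set S : Set ℝ := Icc 0 x₀ ∩ f ⁻¹' {0} with hSdef
    have hS0 : (0:ℝ) ∈ S := ⟨left_mem_Icc.2 (le_of_lt hx₀Ioo.1), h0⟩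
    have hSclosed : IsClosed S :=
      (hcontf.mono (Icc_subset_Icc le_rfl hx₀I.2)).preimage_isClosed_of_isClosed
        isClosed_Icc isClosed_singleton
    have hScompact : IsCompact S :=
      IsCompact.of_isClosed_subset isCompact_Icc hSclosed inter_subset_left
    set α := sSup S with hαdef
    have hαS : α ∈ S := hScompact.sSup_mem ⟨0, hS0⟩
    have hα0 : 0 ≤ α := hαS.1.1
    have hfα : f α = 0 := hαS.2
    have hαx₀ : α < x₀ := lt_of_le_of_ne hαS.1.2 (fun h => absurd hfα (by rw [h]; exact hfx₀.ne))
    have hsub : Icc α x₀ ⊆ Icc (0:ℝ) (1/2) := Icc_subset_Icc hα0 hx₀I.2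
    have hneg : ∀ x ∈ Ioc α x₀, f x < 0 := by
      intro x hx
      by_contra hge
      push_neg at hge
      have hxx₀ : x < x₀ := lt_of_le_of_ne hx.2 (fun h => by rw [h] at hge; linarith)
      have hiv := intermediate_value_Icc' (le_of_lt hxx₀)
        (hcontf.mono (Icc_subset_Icc (le_trans hα0 (le_of_lt hx.1)) hx₀I.2))
      obtain ⟨z, hz, hfz⟩ := hiv ⟨le_of_lt hfx₀, hge⟩
      have hzS : z ∈ S := ⟨⟨le_trans (le_trans hα0 (le_of_lt hx.1)) hz.1, hz.2⟩, hfz⟩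
      have : z ≤ α := le_csSup hScompact.bddAbove hzS
      linarith [hz.1, hx.1]
    have hWanti : AntitoneOn W (Icc α x₀) := by
      apply antitoneOn_of_deriv_nonpos (convex_Icc α x₀) (hcontW.mono hsub)
      · intro x hx
        rw [interior_Icc] at hx
        exact ((hW x (hsub (Ioo_subset_Icc_self hx))).hasDerivAt
          (Icc_mem_nhds (lt_of_le_of_lt hα0 hx.1)
            (lt_trans hx.2 hx₀Ioo.2))).differentiableAt.differentiableWithinAt
      · intro x hx
        rw [interior_Icc] at hx
        have hxI := hsub (Ioo_subset_Icc_self hx)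
        rw [((hW x hxI).hasDerivAt
          (Icc_mem_nhds (lt_of_le_of_lt hα0 hx.1) (lt_trans hx.2 hx₀Ioo.2))).deriv]
        exact le_of_lt (mul_neg_of_pos_of_neg hc
          (mul_neg_of_pos_of_neg (hh x hxI) (hneg x ⟨hx.1, le_of_lt hx.2⟩)))
    have hWnn : ∀ x ∈ Icc α x₀, 0 ≤ W x := by
      intro x hx
      have := hWanti hx (right_mem_Icc.2 (le_of_lt hαx₀)) hx.2
      rw [hW0] at this
      exact this
    have hgmono : MonotoneOn g (Icc α x₀) := by
      apply monotoneOn_of_deriv_nonneg (convex_Icc α x₀) (hcontg.mono hsub)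
      · intro x hx
        rw [interior_Icc] at hx
        exact ((hg x (hsub (Ioo_subset_Icc_self hx))).hasDerivAt
          (Icc_mem_nhds (lt_of_le_of_lt hα0 hx.1)
            (lt_trans hx.2 hx₀Ioo.2))).differentiableAt.differentiableWithinAt
      · intro x hx
        rw [interior_Icc] at hx
        have hxI := hsub (Ioo_subset_Icc_self hx)
        rw [((hg x hxI).hasDerivAt
          (Icc_mem_nhds (lt_of_le_of_lt hα0 hx.1) (lt_trans hx.2 hx₀Ioo.2))).deriv]
        exact div_nonneg (hWnn x (Ioo_subset_Icc_self hx)) (sq_nonneg _)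
    have hgα : g α = 0 := by simp [hgdef, hfα]
    have := hgmono (left_mem_Icc.2 (le_of_lt hαx₀)) (right_mem_Icc.2 (le_of_lt hαx₀))
      (le_of_lt hαx₀)
    rw [hgα] at this
    linarith
  -- Step 2 : strict positivity on (0, 1/2]
  intro x hx
  rcases eq_or_lt_of_le hx.2 with heq | hlt
  · rw [heq, h12]; norm_num
  have hxI : x ∈ Icc (0:ℝ) (1/2) := ⟨hx.1.le, hx.2⟩
  rcases lt_or_eq_of_le (hfnn x hxI) with hpos | hzero
  · exact hpos
  exfalso
  have hfx : f x = 0 := hzero.symm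
  have hgnn : ∀ t ∈ Icc (0:ℝ) (1/2), 0 ≤ g t := fun t ht =>
    div_nonneg (hfnn t ht) (hh t ht).le
  have hgx : g x = 0 := by simp [hgdef, hfx]
  have hnh : Icc (0:ℝ) (1/2) ∈ 𝓝 x := Icc_mem_nhds hx.1 hlt
  have hminx : IsMinOn g (Icc 0 (1/2)) x := by
    apply isMinOn_iff.2
    intro t ht
    rw [hgx]
    exact hgnn t ht
  have hWx : W x = 0 := by
    have hdg : HasDerivAt g (W x / (μ^2 - x^2)^2) x := (hg x hxI).hasDerivAt hnh
    have hz := (hminx.isLocalMin hnh).hasDerivAt_eq_zero hdg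
    rcases div_eq_zero_iff.1 hz with h | h
    · exact h
    · exact absurd h (pow_ne_zero 2 (ne_of_gt (hh x hxI)))
  have hWmono : MonotoneOn W (Icc (0:ℝ) (1/2)) := by
    apply monotoneOn_of_deriv_nonneg (convex_Icc _ _) hcontW
    · intro t ht
      rw [interior_Icc] at ht
      exact ((hW t (Ioo_subset_Icc_self ht)).hasDerivAt
        (Icc_mem_nhds ht.1 ht.2)).differentiableAt.differentiableWithinAt
    · intro t ht
      rw [interior_Icc] at ht
      have htI := Ioo_subset_Icc_self ht
      rw [((hW t htI).hasDerivAt (Icc_mem_nhds ht.1 ht.2)).deriv]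
      exact mul_nonneg hc.le (mul_nonneg (hh t htI).le (hfnn t htI))
  have hWle : ∀ t ∈ Icc (0:ℝ) x, W t ≤ 0 := by
    intro t ht
    have := hWmono ⟨ht.1, le_trans ht.2 hx.2⟩ hxI ht.2
    rw [hWx] at this
    exact this
  have hsub2 : Icc (0:ℝ) x ⊆ Icc (0:ℝ) (1/2) := Icc_subset_Icc le_rfl hx.2
  have hganti : AntitoneOn g (Icc (0:ℝ) x) := by
    apply antitoneOn_of_deriv_nonpos (convex_Icc _ _) (hcontg.mono hsub2)
    · intro t ht
      rw [interior_Icc] at ht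
      exact ((hg t (hsub2 (Ioo_subset_Icc_self ht))).hasDerivAt
        (Icc_mem_nhds ht.1 (lt_trans ht.2 hlt))).differentiableAt.differentiableWithinAt
    · intro t ht
      rw [interior_Icc] at ht
      have htI := hsub2 (Ioo_subset_Icc_self ht)
      rw [((hg t htI).hasDerivAt (Icc_mem_nhds ht.1 (lt_trans ht.2 hlt))).deriv]
      exact div_nonpos_of_nonpos_of_nonneg (hWle t (Ioo_subset_Icc_self ht)) (sq_nonneg _)
  have hfzero : ∀ t ∈ Icc (0:ℝ) x, f t = 0 := by
    intro t ht
    have h1 : g t ≤ g 0 := hganti (left_mem_Icc.2 hx.1.le) ht ht.1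
    rw [hg0] at h1
    have h2 : g t = 0 := le_antisymm h1 (hgnn t (hsub2 ht))
    have := hh t (hsub2 ht)
    rw [hgdef] at h2
    simp only [div_eq_zero_iff] at h2
    rcases h2 with h | h
    · exact h
    · linarith
  -- hence f and F' vanish at x
  have hUD : UniqueDiffWithinAt ℝ (Icc (0:ℝ) x) x := (uniqueDiffOn_Icc hx.1) x (right_mem_Icc.2 hx.1.le)
  have hd1 : HasDerivWithinAt f (F' x) (Icc 0 x) x := (hder1 x hxI).mono hsub2
  have hd2 : HasDerivWithinAt f 0 (Icc (0:ℝ) x) x := by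
    apply (hasDerivWithinAt_const x (Icc (0:ℝ) x) (0:ℝ)).congr hfzero hfx
  have hF'x : F' x = 0 := by rw [← hd1.derivWithin hUD, hd2.derivWithin hUD]
  -- Gronwall argument on [x, 1/2]
  set M : ℝ := 2 / (μ^2 - (1/2:ℝ)^2) + c with hMdef
  have hM4 : 0 < μ^2 - (1/2:ℝ)^2 := hh (1/2) hmem2
  have hMpos : 0 < M := by positivity
  set K : ℝ := max 1 M with hKdef
  have hK1 : (1:ℝ) ≤ K := le_max_left _ _
  have hKM : M ≤ K := le_max_right _ _
  have hqbound : ∀ t ∈ Icc (0:ℝ) (1/2), |2/(t^2 - μ^2) + c| ≤ M := by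
    intro t ht
    have h1 : 0 < μ^2 - t^2 := hh t ht
    have h2 : μ^2 - (1/2:ℝ)^2 ≤ μ^2 - t^2 := by nlinarith [ht.1, ht.2]
    have h3 : 2/(μ^2 - t^2) ≤ 2/(μ^2 - (1/2:ℝ)^2) :=
      div_le_div_of_nonneg_left (by norm_num) hM4 h2
    have h4 : 2/(t^2 - μ^2) = -(2/(μ^2 - t^2)) := by
      rw [show t^2 - μ^2 = -(μ^2 - t^2) by ring, div_neg]
    have h5 : 0 < 2/(μ^2 - t^2) := by positivity
    rw [abs_le]
    constructor
    · rw [h4, hMdef]; linarith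
    · rw [h4, hMdef]; linarith [div_pos (by norm_num : (0:ℝ) < 2) hM4]
  set y : ℝ → ℝ × ℝ := fun t => (f t, F' t) with hydef
  have hsub3 : Icc x (1/2:ℝ) ⊆ Icc (0:ℝ) (1/2) := Icc_subset_Icc hx.1.le le_rfl
  have hcy : ContinuousOn y (Icc x (1/2)) :=
    (hcontf.mono hsub3).prodMk (hcontF'.mono hsub3)
  have key := norm_le_gronwallBound_of_norm_deriv_right_le (f := y)
    (f' := fun t => (F' t, (2/(t^2 - μ^2) + c) * f t)) (δ := 0) (K := K) (ε := 0)
    (a := x) (b := 1/2) hcy ?_ ?_ ?_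
  · have h12' := key (1/2) ⟨hx.2, le_rfl⟩
    rw [gronwallBound_ε0_δ0] at h12'
    have hy0 : y (1/2) = 0 := norm_le_zero_iff.1 h12'
    have : f (1/2) = 0 := by
      have := congrArg Prod.fst hy0
      simpa [hydef] using this
    rw [h12] at this
    norm_num at this
  · -- derivative condition
    intro t ht
    have htI : t ∈ Icc (0:ℝ) (1/2) := ⟨le_trans hx.1.le ht.1, ht.2.le⟩
    have hmem' : Icc t (1/2:ℝ) ∈ 𝓝[Ici t] t := by
      rw [← Ici_inter_Iic]
      exact inter_mem self_mem_nhdsWithin (mem_nhdsWithin_of_mem_nhds (Iic_mem_nhds ht.2))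
    have h1 : HasDerivWithinAt f (F' t) (Ici t) t :=
      ((hder1 t htI).mono (Icc_subset_Icc htI.1 le_rfl)).mono_of_mem_nhdsWithin hmem'
    have h2 : HasDerivWithinAt F' (F'' t) (Ici t) t :=
      ((hder2 t htI).mono (Icc_subset_Icc htI.1 le_rfl)).mono_of_mem_nhdsWithin hmem'
    have h3 : HasDerivWithinAt F' ((2/(t^2 - μ^2) + c) * f t) (Ici t) t := by
      rw [← hF'' t htI]; exact h2
    exact h1.prodMk h3
  · -- initial condition
    have : y x = 0 := by
      rw [hydef]
      simp only [hfx, hF'x]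
      rfl
    rw [this, norm_zero]
  · -- norm bound
    intro t ht
    have htI : t ∈ Icc (0:ℝ) (1/2) := ⟨le_trans hx.1.le ht.1, ht.2.le⟩
    rw [Prod.norm_def, Prod.norm_def]
    simp only [hydef, Real.norm_eq_abs, add_zero]
    have hKnn : (0:ℝ) ≤ K := le_trans zero_le_one hK1
    apply max_le
    · calc |F' t| ≤ max |f t| |F' t| := le_max_right _ _
        _ ≤ K * max |f t| |F' t| :=
          le_mul_of_one_le_left (le_trans (abs_nonneg _) (le_max_right _ _)) hK1
    · calc |(2/(t^2 - μ^2) + c) * f t| = |2/(t^2 - μ^2) + c| * |f t| := abs_mul _ _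
        _ ≤ K * |f t| := by
            apply mul_le_mul (le_trans (hqbound t htI) hKM) le_rfl (abs_nonneg _) hKnn
        _ ≤ K * max |f t| |F' t| := by
            apply mul_le_mul_of_nonneg_left (le_max_left _ _) hKnn

lemma deriv_setup (f : ℝ → ℝ) (hf : ContDiffOn ℝ 2 f (Set.Icc 0 (1/2))) :
    (∀ x ∈ Set.Icc (0:ℝ) (1/2),
      HasDerivWithinAt f (derivWithin f (Set.Icc 0 (1/2)) x) (Set.Icc 0 (1/2)) x) ∧
    (∀ x ∈ Set.Icc (0:ℝ) (1/2),
      HasDerivWithinAt (derivWithin f (Set.Icc 0 (1/2)))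
        (derivWithin (derivWithin f (Set.Icc 0 (1/2))) (Set.Icc 0 (1/2)) x)
        (Set.Icc 0 (1/2)) x) ∧
    ContinuousOn (derivWithin f (Set.Icc 0 (1/2))) (Set.Icc 0 (1/2)) ∧
    (∀ x ∈ Set.Icc (0:ℝ) (1/2),
      derivWithin (derivWithin f (Set.Icc 0 (1/2))) (Set.Icc 0 (1/2)) x
        = iteratedDerivWithin 2 f (Set.Icc 0 (1/2)) x) := by
  have hI : UniqueDiffOn ℝ (Icc (0:ℝ) (1/2)) := uniqueDiffOn_Icc (by norm_num)
  have hcd1 : ContDiffOn ℝ 1 (derivWithin f (Icc 0 (1/2))) (Icc 0 (1/2)) :=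
    hf.derivWithin hI (by norm_num)
  refine ⟨fun x hx => ((hf.differentiableOn (by norm_num)) x hx).hasDerivWithinAt,
    fun x hx => ((hcd1.differentiableOn (by norm_num)) x hx).hasDerivWithinAt,
    hcd1.continuousOn, fun x hx => ?_⟩
  rw [iteratedDerivWithin_succ]
  exact derivWithin_congr (fun y hy => (congrFun iteratedDerivWithin_one y).symm)
    (congrFun iteratedDerivWithin_one x).symm

/-- Monotonicity in the frequency on the left interval: for `μ > 1/2`, `ε ∈ (0,1)` and
positive integers `n₁ < n₂`, the solutions `fᵢ` of `fᵢ'' = (2/(x²-μ²) + (1-ε)²nᵢ²) fᵢ`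
on `[0,1/2]` with `fᵢ(0)=0`, `fᵢ(1/2)=1` satisfy `f₁ > f₂` on `(0,1/2)` and both are
strictly positive on `(0,1/2]`. -/
theorem statement9 (ε μ : ℝ) (hε : ε ∈ Set.Ioo (0:ℝ) 1) (hμ : 1 / 2 < μ)
    (n₁ n₂ : ℕ) (hn₁ : 0 < n₁) (hn : n₁ < n₂) (f₁ f₂ : ℝ → ℝ)
    (hf₁ : ContDiffOn ℝ 2 f₁ (Set.Icc 0 (1 / 2)))
    (hf₂ : ContDiffOn ℝ 2 f₂ (Set.Icc 0 (1 / 2)))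
    (hode₁ : ∀ x ∈ Set.Icc (0:ℝ) (1 / 2),
      iteratedDerivWithin 2 f₁ (Set.Icc 0 (1 / 2)) x
        = (2 / (x ^ 2 - μ ^ 2) + (1 - ε) ^ 2 * (n₁ : ℝ) ^ 2) * f₁ x)
    (hode₂ : ∀ x ∈ Set.Icc (0:ℝ) (1 / 2),
      iteratedDerivWithin 2 f₂ (Set.Icc 0 (1 / 2)) x
        = (2 / (x ^ 2 - μ ^ 2) + (1 - ε) ^ 2 * (n₂ : ℝ) ^ 2) * f₂ x)
    (h₁0 : f₁ 0 = 0) (h₁12 : f₁ (1 / 2) = 1)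
    (h₂0 : f₂ 0 = 0) (h₂12 : f₂ (1 / 2) = 1) :
    (∀ x ∈ Set.Ioo (0:ℝ) (1 / 2), f₂ x < f₁ x) ∧
    (∀ x ∈ Set.Ioc (0:ℝ) (1 / 2), 0 < f₁ x ∧ 0 < f₂ x) := by
  have hε1 : 0 < 1 - ε := by linarith [hε.2]
  have hn₁R : (0:ℝ) < (n₁:ℝ) := by exact_mod_cast hn₁
  have hn₂R : (n₁:ℝ) < (n₂:ℝ) := by exact_mod_cast hn
  set c₁ : ℝ := (1 - ε)^2 * (n₁:ℝ)^2 with hc₁def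
  set c₂ : ℝ := (1 - ε)^2 * (n₂:ℝ)^2 with hc₂def
  have hc₁ : 0 < c₁ := by positivity
  have hcc : c₁ < c₂ := by
    rw [hc₁def, hc₂def]
    have : (n₁:ℝ)^2 < (n₂:ℝ)^2 := by nlinarith
    nlinarith [sq_nonneg (1 - ε)]
  have hc₂ : 0 < c₂ := lt_trans hc₁ hcc
  have pos₁ := key_pos μ c₁ hμ hc₁ f₁ hf₁ hode₁ h₁0 h₁12
  have pos₂ := key_pos μ c₂ hμ hc₂ f₂ hf₂ hode₂ h₂0 h₂12
  refine ⟨?_, fun x hx => ⟨pos₁ x hx, pos₂ x hx⟩⟩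
  -- comparison via the Wronskian of f₁ and f₂
  obtain ⟨hd₁, hd₁', hcF₁', hit₁⟩ := deriv_setup f₁ hf₁
  obtain ⟨hd₂, hd₂', hcF₂', hit₂⟩ := deriv_setup f₂ hf₂
  set F₁' : ℝ → ℝ := derivWithin f₁ (Icc 0 (1/2)) with hF₁def
  set F₂' : ℝ → ℝ := derivWithin f₂ (Icc 0 (1/2)) with hF₂def
  set V : ℝ → ℝ := fun x => F₁' x * f₂ x - f₁ x * F₂' x with hVdef
  have hV : ∀ x ∈ Icc (0:ℝ) (1/2),
      HasDerivWithinAt V ((c₁ - c₂) * (f₁ x * f₂ x)) (Icc 0 (1/2)) x := by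
    intro x hx
    have h1 := ((hd₁' x hx).mul (hd₂ x hx)).sub ((hd₁ x hx).mul (hd₂' x hx))
    refine HasDerivWithinAt.congr_deriv h1 ?_
    rw [hit₁ x hx, hit₂ x hx, hode₁ x hx, hode₂ x hx]
    ring
  have hVcont : ContinuousOn V (Icc (0:ℝ) (1/2)) :=
    (hcF₁'.mul hf₂.continuousOn).sub (hf₁.continuousOn.mul hcF₂')
  have hV0 : V 0 = 0 := by simp [hVdef, h₁0, h₂0]
  have hVanti : StrictAntiOn V (Icc (0:ℝ) (1/2)) := by
    apply strictAntiOn_of_deriv_neg (convex_Icc _ _) hVcont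
    intro x hx
    rw [interior_Icc] at hx
    have hxI : x ∈ Icc (0:ℝ) (1/2) := Ioo_subset_Icc_self hx
    rw [((hV x hxI).hasDerivAt (Icc_mem_nhds hx.1 hx.2)).deriv]
    exact mul_neg_of_neg_of_pos (by linarith)
      (mul_pos (pos₁ x ⟨hx.1, hx.2.le⟩) (pos₂ x ⟨hx.1, hx.2.le⟩))
  have hVneg : ∀ x ∈ Ioc (0:ℝ) (1/2), V x < 0 := by
    intro x hx
    have := hVanti (left_mem_Icc.2 (by norm_num)) ⟨hx.1.le, hx.2⟩ hx.1
    rw [hV0] at this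
    exact this
  intro x hx
  set r : ℝ → ℝ := fun t => f₁ t / f₂ t with hrdef
  have hsub : Icc x (1/2:ℝ) ⊆ Icc (0:ℝ) (1/2) := Icc_subset_Icc hx.1.le le_rfl
  have hf₂ne : ∀ t ∈ Icc x (1/2:ℝ), f₂ t ≠ 0 :=
    fun t ht => (pos₂ t ⟨lt_of_lt_of_le hx.1 ht.1, ht.2⟩).ne'
  have hrcont : ContinuousOn r (Icc x (1/2)) :=
    (hf₁.continuousOn.mono hsub).div (hf₂.continuousOn.mono hsub) hf₂ne
  have hranti : StrictAntiOn r (Icc x (1/2)) := by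
    apply strictAntiOn_of_deriv_neg (convex_Icc _ _) hrcont
    intro t ht
    rw [interior_Icc] at ht
    have htoo : t ∈ Ioo (0:ℝ) (1/2) := ⟨lt_trans hx.1 ht.1, ht.2⟩
    have htI : t ∈ Icc (0:ℝ) (1/2) := Ioo_subset_Icc_self htoo
    have hdr : HasDerivAt r ((F₁' t * f₂ t - f₁ t * F₂' t) / (f₂ t)^2) t :=
      ((hd₁ t htI).hasDerivAt (Icc_mem_nhds htoo.1 htoo.2)).div
        ((hd₂ t htI).hasDerivAt (Icc_mem_nhds htoo.1 htoo.2))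
        (pos₂ t ⟨htoo.1, htoo.2.le⟩).ne'
    rw [hdr.deriv]
    exact div_neg_of_neg_of_pos (hVneg t ⟨htoo.1, htoo.2.le⟩)
      (pow_pos (pos₂ t ⟨htoo.1, htoo.2.le⟩) 2)
  have hlast : r (1/2) < r x :=
    hranti (left_mem_Icc.2 hx.2.le) (right_mem_Icc.2 hx.2.le) hx.2
  have hr12 : r (1/2) = 1 := by
    show f₁ (1/2) / f₂ (1/2) = 1
    rw [h₁12, h₂12]; norm_num
  rw [hr12, hrdef] at hlast
  exact (one_lt_div (pos₂ x ⟨hx.1, hx.2.le⟩)).1 hlast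
end

section
/- Let ε ∈ (0,1), 0 ≤ ν < 1/2 and let n₁ < n₂ be positive integers. For i = 1,2 let f_i ∈ C²([1/2,1]) satisfy f_i''(x) = ( 2/(x²−ν²) + (1−ε)² n_i² ) f_i(x) for all x ∈ [1/2,1], with f_i(1) = 0 and f_i(1/2) = 1. Then f₁(x) > f₂(x) for all x ∈ (1/2,1), and both f₁ and f₂ are strictly positive on [1/2,1). -/
open Set Filter Topology
open scoped NNReal

-- uniqueness: if f(c)=f'(c)=0 then f vanishes on [(a+c)/2, c]
lemma ode_vanish {a b c : ℝ} {q f g : ℝ → ℝ}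
    (hq : ContinuousOn q (Set.Icc a b))
    (hfc : ContinuousOn f (Set.Icc a b)) (hgc : ContinuousOn g (Set.Icc a b))
    (hf' : ∀ x ∈ Set.Ioo a b, HasDerivAt f (g x) x)
    (hg' : ∀ x ∈ Set.Ioo a b, HasDerivAt g (q x * f x) x)
    (hc : c ∈ Set.Ioo a b) (hfc0 : f c = 0) (hgc0 : g c = 0) :
    ∀ y ∈ Set.Icc ((a + c) / 2) c, f y = 0 := by
  set m := (a + c) / 2 with hm
  have hmc : m < c := by simp only [hm]; linarith [hc.1]
  have ham : a < m := by simp only [hm]; linarith [hc.1]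
  obtain ⟨C, hC⟩ := isCompact_Icc.exists_bound_of_continuousOn hq
  have hC0 : 0 ≤ C := le_trans (norm_nonneg _) (hC a ⟨le_refl a, le_of_lt (lt_trans hc.1 hc.2)⟩)
  set Q : ℝ → ℝ := fun t => q (max m (min c t)) with hQ
  have hQb : ∀ t, |Q t| ≤ C := by
    intro t
    apply hC
    constructor
    · exact le_trans (le_of_lt ham) (le_max_left _ _)
    · exact le_trans (max_le (le_of_lt hmc) (min_le_left _ _)) (le_of_lt hc.2)
  set K : ℝ≥0 := ⟨max 1 C, le_trans zero_le_one (le_max_left _ _)⟩ with hK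
  set v : ℝ → ℝ × ℝ → ℝ × ℝ := fun t p => (p.2, Q t * p.1) with hv
  have hlip : ∀ t, LipschitzOnWith K (v t) Set.univ := by
    intro t
    apply LipschitzWith.lipschitzOnWith
    apply LipschitzWith.of_dist_le_mul
    intro p p'
    rw [Prod.dist_eq]
    have hd : (0:ℝ) ≤ dist p p' := dist_nonneg
    have hK1 : (1:ℝ) ≤ (K:ℝ) := le_max_left _ _
    have hKC : C ≤ (K:ℝ) := le_max_right _ _
    apply max_le
    · calc dist (v t p).1 (v t p').1 = dist p.2 p'.2 := rfl
        _ ≤ dist p p' := by rw [Prod.dist_eq]; exact le_max_right _ _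
        _ ≤ K * dist p p' := by nlinarith
    · have : dist (v t p).2 (v t p').2 = |Q t| * |p.1 - p'.1| := by
        simp only [hv, Real.dist_eq]
        rw [← abs_mul]; ring_nf
      rw [this]
      have h1 : |p.1 - p'.1| ≤ dist p p' := by
        rw [← Real.dist_eq, Prod.dist_eq]; exact le_max_left _ _
      have h2 := hQb t
      have h3 : (0:ℝ) ≤ |p.1 - p'.1| := abs_nonneg _
      nlinarith
  have key : Set.EqOn (fun t => (f t, g t)) (fun _ => ((0:ℝ), (0:ℝ))) (Set.Icc m c) := by
    apply ODE_solution_unique_of_mem_Icc_left (v := v) (s := fun _ => Set.univ) (K := K) (fun t _ => hlip t)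
    · exact ((hfc.mono (Set.Icc_subset_Icc (le_of_lt ham) (le_of_lt hc.2))).prodMk
        (hgc.mono (Set.Icc_subset_Icc (le_of_lt ham) (le_of_lt hc.2))))
    · intro t ht
      have ht' : t ∈ Set.Ioo a b := ⟨lt_trans ham ht.1, lt_of_le_of_lt ht.2 hc.2⟩
      have hQt : Q t = q t := by
        simp only [hQ]
        rw [min_eq_right ht.2, max_eq_right (le_of_lt ht.1)]
      have := (hf' t ht').prodMk (hg' t ht')
      have h2 : v t (f t, g t) = (g t, q t * f t) := by simp [hv, hQt]
      rw [h2]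
      exact this.hasDerivWithinAt
    · intro t _; exact Set.mem_univ _
    · exact continuousOn_const
    · intro t ht
      have : v t ((0:ℝ), (0:ℝ)) = ((0:ℝ), (0:ℝ)) := by simp [hv]
      rw [this]
      exact (hasDerivWithinAt_const t _ _).congr_deriv (by simp [Prod.ext_iff])
    · intro t _; exact Set.mem_univ _
    · simp [hfc0, hgc0]
  intro y hy
  have := key hy
  simpa using congrArg Prod.fst this

-- positivity of the solution on [a, b)
lemma ode_pos {a b : ℝ} (hab : a < b) {q f g : ℝ → ℝ}
    (hq : ContinuousOn q (Set.Icc a b)) (hqpos : ∀ x ∈ Set.Icc a b, 0 < q x)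
    (hfc : ContinuousOn f (Set.Icc a b)) (hgc : ContinuousOn g (Set.Icc a b))
    (hf' : ∀ x ∈ Set.Ioo a b, HasDerivAt f (g x) x)
    (hg' : ∀ x ∈ Set.Ioo a b, HasDerivAt g (q x * f x) x)
    (hfb : f b = 0) (hfa : 0 < f a) :
    ∀ x ∈ Set.Ico a b, 0 < f x := by
  set S : Set ℝ := Set.Icc a b ∩ f ⁻¹' Set.Iic 0 with hS
  have hSclosed : IsClosed S := hfc.preimage_isClosed_of_isClosed isClosed_Icc isClosed_Iic
  have hSne : S.Nonempty := ⟨b, ⟨le_of_lt hab, le_refl b⟩, le_of_eq hfb⟩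
  have hSbdd : BddBelow S := ⟨a, fun x hx => hx.1.1⟩
  set c := sInf S with hc
  have hcS : c ∈ S := hSclosed.csInf_mem hSne hSbdd
  have hca : a ≤ c := le_csInf hSne fun x hx => hx.1.1
  have hcb : c ≤ b := csInf_le hSbdd ⟨⟨le_of_lt hab, le_refl b⟩, le_of_eq hfb⟩
  have hposlt : ∀ y ∈ Set.Ico a c, 0 < f y := by
    intro y hy
    by_contra hy'
    push_neg at hy'
    have : y ∈ S := ⟨⟨hy.1, le_trans (le_of_lt hy.2) hcb⟩, hy'⟩
    exact absurd (csInf_le hSbdd this) (not_le.2 hy.2)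
  have hac : a < c := by
    rcases eq_or_lt_of_le hca with h | h
    · exfalso; have := hcS.2; rw [← h] at this; exact absurd this (not_le.2 hfa)
    · exact h
  have hfc0 : f c = 0 := by
    refine le_antisymm hcS.2 ?_
    have hcl : c ∈ closure (Set.Ico a c) := by
      rw [closure_Ico (ne_of_lt hac)]; exact ⟨hca, le_refl c⟩
    haveI : (𝓝[Set.Ico a c] c).NeBot := mem_closure_iff_nhdsWithin_neBot.1 hcl
    have htd : Filter.Tendsto f (𝓝[Set.Ico a c] c) (𝓝 (f c)) :=
      (hfc c ⟨hca, hcb⟩).mono_left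
        (nhdsWithin_mono c fun y hy => ⟨hy.1, le_trans (le_of_lt hy.2) hcb⟩)
    exact ge_of_tendsto htd (eventually_mem_nhdsWithin.mono fun y hy => le_of_lt (hposlt y hy))
  -- suffices to show c = b
  suffices hcbe : c = b by
    intro x hx; exact hposlt x ⟨hx.1, hcbe ▸ hx.2⟩
  by_contra hne
  have hcb' : c < b := lt_of_le_of_ne hcb hne
  have hcI : c ∈ Set.Ioo a b := ⟨hac, hcb'⟩
  -- g c ≤ 0
  have hslope := hasDerivAt_iff_tendsto_slope.1 (hf' c hcI)
  have hgc0 : g c ≤ 0 := by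
    have hcl : c ∈ closure (Set.Ioo a c) := by
      rw [closure_Ioo (ne_of_lt hac)]; exact ⟨hca, le_refl c⟩
    haveI : (𝓝[Set.Ioo a c] c).NeBot := mem_closure_iff_nhdsWithin_neBot.1 hcl
    have htd : Filter.Tendsto (slope f c) (𝓝[Set.Ioo a c] c) (𝓝 (g c)) :=
      hslope.mono_left (nhdsWithin_mono c fun y hy => ne_of_lt hy.2)
    refine le_of_tendsto htd (eventually_mem_nhdsWithin.mono fun y hy => ?_)
    rw [slope_def_field, hfc0, sub_zero]
    have h1 : 0 < f y := hposlt y ⟨le_of_lt hy.1, hy.2⟩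
    have h2 : y - c < 0 := sub_neg.2 hy.2
    rw [div_eq_mul_inv]
    exact le_of_lt (mul_neg_of_pos_of_neg h1 (inv_neg''.2 h2))
  rcases eq_or_lt_of_le hgc0 with hgeq | hglt
  · -- g c = 0 : uniqueness gives contradiction
    have := ode_vanish hq hfc hgc hf' hg' hcI hfc0 hgeq
    have hmid : (a + c) / 2 ∈ Set.Ico a c := ⟨by linarith, by linarith⟩
    have := this ((a + c) / 2) ⟨le_refl _, by linarith⟩
    exact absurd this (ne_of_gt (hposlt _ hmid))
  · -- g c < 0 : f goes negative and stays negative, contradiction with f b = 0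
    -- find e ∈ (c, b) with f < 0 on (c, e]
    have htd : Filter.Tendsto (slope f c) (𝓝[>] c) (𝓝 (g c)) :=
      hslope.mono_left (nhdsWithin_mono c fun y hy => ne_of_gt hy)
    have hev : ∀ᶠ y in 𝓝[>] c, slope f c y < 0 := htd.eventually_lt_const hglt
    obtain ⟨u, hu, hsub⟩ := mem_nhdsGT_iff_exists_Ioc_subset.1 hev
    set e := min u ((c + b) / 2) with he
    have hce : c < e := lt_min hu (by linarith)
    have heb : e < b := lt_of_le_of_lt (min_le_right _ _) (by linarith)
    have hneg1 : ∀ y ∈ Set.Ioc c e, f y < 0 := by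
      intro y hy
      have hsl : slope f c y < 0 := hsub ⟨hy.1, le_trans hy.2 (min_le_left _ _)⟩
      rw [slope_def_field, hfc0, sub_zero] at hsl
      have hyc : 0 < y - c := sub_pos.2 hy.1
      rcases div_neg_iff.1 hsl with ⟨h1, h2⟩ | ⟨h1, h2⟩
      · linarith
      · exact h1
    -- first zero after e
    set T : Set ℝ := Set.Icc e b ∩ f ⁻¹' {0} with hT
    have hTclosed : IsClosed T :=
      (hfc.mono (Set.Icc_subset_Icc (le_trans (le_of_lt hac) (le_of_lt hce)) (le_refl b))
        ).preimage_isClosed_of_isClosed isClosed_Icc isClosed_singleton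
    have hTne : T.Nonempty := ⟨b, ⟨le_of_lt heb, le_refl b⟩, hfb⟩
    have hTbdd : BddBelow T := ⟨e, fun x hx => hx.1.1⟩
    set d := sInf T with hd
    have hdT : d ∈ T := hTclosed.csInf_mem hTne hTbdd
    have hde : e ≤ d := le_csInf hTne fun x hx => hx.1.1
    have hdb : d ≤ b := hdT.1.2
    have hfd : f d = 0 := hdT.2
    have hed : e < d := by
      rcases eq_or_lt_of_le hde with h | h
      · exfalso; exact absurd hfd (by rw [← h]; exact ne_of_lt (hneg1 e ⟨hce, le_refl e⟩))
      · exact h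
    have hcd : c < d := lt_trans hce hed
    -- f < 0 on (c, d)
    have hneg : ∀ y ∈ Set.Ioo c d, f y < 0 := by
      intro y hy
      rcases le_or_gt y e with h | h
      · exact hneg1 y ⟨hy.1, h⟩
      · by_contra hpos
        push_neg at hpos
        rcases eq_or_lt_of_le hpos with h0 | h0
        · exact absurd (csInf_le hTbdd ⟨⟨le_of_lt h, le_trans (le_of_lt hy.2) hdb⟩, h0.symm⟩)
            (not_le.2 hy.2)
        · have hcont : ContinuousOn f (Set.Icc e y) := hfc.mono (Set.Icc_subset_Icc
            (le_trans (le_of_lt hac) (le_of_lt hce)) (le_trans (le_of_lt hy.2) hdb))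
          have hiv := intermediate_value_Ioo (le_of_lt h) hcont
          have h0m : (0:ℝ) ∈ Set.Ioo (f e) (f y) := ⟨hneg1 e ⟨hce, le_refl e⟩, h0⟩
          obtain ⟨z, hz, hfz⟩ := hiv h0m
          have : z ∈ T := ⟨⟨le_of_lt hz.1, le_trans (le_of_lt hz.2) (le_trans (le_of_lt hy.2) hdb)⟩, hfz⟩
          exact absurd (csInf_le hTbdd this) (not_le.2 (lt_trans hz.2 hy.2))
    -- f ≤ 0 on [c, d]
    have hle : ∀ y ∈ Set.Icc c d, f y ≤ 0 := by
      intro y hy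
      rcases eq_or_lt_of_le hy.1 with h | h
      · rw [← h, hfc0]
      · rcases eq_or_lt_of_le hy.2 with h2 | h2
        · rw [h2, hfd]
        · exact le_of_lt (hneg y ⟨h, h2⟩)
    have hsubIoo : Set.Ioo c d ⊆ Set.Ioo a b := fun y hy =>
      ⟨lt_trans hac hy.1, lt_of_lt_of_le hy.2 hdb⟩
    have hsubIcc : Set.Icc c d ⊆ Set.Icc a b := fun y hy =>
      ⟨le_trans hca hy.1, le_trans hy.2 hdb⟩
    -- g is antitone on [c, d]
    have hganti : AntitoneOn g (Set.Icc c d) := by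
      apply antitoneOn_of_deriv_nonpos (convex_Icc c d) (hgc.mono hsubIcc)
      · intro y hy
        rw [interior_Icc] at hy
        exact ((hg' y (hsubIoo hy)).differentiableAt).differentiableWithinAt
      · intro y hy
        rw [interior_Icc] at hy
        rw [(hg' y (hsubIoo hy)).deriv]
        exact mul_nonpos_of_nonneg_of_nonpos (le_of_lt (hqpos y (hsubIcc (Set.mem_Icc_of_Ioo hy))))
          (hle y (Set.mem_Icc_of_Ioo hy))
    -- f is strictly decreasing on [c, d]
    have hanti : StrictAntiOn f (Set.Icc c d) := by
      apply strictAntiOn_of_deriv_neg (convex_Icc c d) (hfc.mono hsubIcc)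
      intro y hy
      rw [interior_Icc] at hy
      rw [(hf' y (hsubIoo hy)).deriv]
      exact lt_of_le_of_lt
        (hganti (Set.left_mem_Icc.2 (le_of_lt hcd)) (Set.mem_Icc_of_Ioo hy) (le_of_lt hy.1)) hglt
    have := hanti (Set.left_mem_Icc.2 (le_of_lt hcd)) (Set.right_mem_Icc.2 (le_of_lt hcd)) hcd
    rw [hfc0, hfd] at this
    exact absurd this (lt_irrefl 0)

lemma ode_derivs {a b : ℝ} (hab : a < b) {f : ℝ → ℝ}
    (hf : ContDiffOn ℝ 2 f (Set.Icc a b)) :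
    ∃ g : ℝ → ℝ, ContinuousOn g (Set.Icc a b) ∧
      (∀ x ∈ Set.Ioo a b, HasDerivAt f (g x) x) ∧
      (∀ x ∈ Set.Ioo a b, HasDerivAt g (iteratedDerivWithin 2 f (Set.Icc a b) x) x) := by
  have hu : UniqueDiffOn ℝ (Set.Icc a b) := uniqueDiffOn_Icc hab
  refine ⟨derivWithin f (Set.Icc a b), hf.continuousOn_derivWithin hu one_le_two, ?_, ?_⟩
  · intro x hx
    have h1 : DifferentiableWithinAt ℝ f (Set.Icc a b) x :=
      (hf.differentiableOn two_ne_zero) x (Set.Ioo_subset_Icc_self hx)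
    exact h1.hasDerivWithinAt.hasDerivAt (Icc_mem_nhds hx.1 hx.2)
  · intro x hx
    have hcd : ContDiffOn ℝ 1 (derivWithin f (Set.Icc a b)) (Set.Icc a b) :=
      hf.derivWithin hu (by norm_num)
    have h2 : DifferentiableWithinAt ℝ (derivWithin f (Set.Icc a b)) (Set.Icc a b) x :=
      hcd.differentiableOn one_ne_zero x (Set.Ioo_subset_Icc_self hx)
    have h3 := h2.hasDerivWithinAt.hasDerivAt (Icc_mem_nhds hx.1 hx.2)
    have h4 : iteratedDerivWithin 2 f (Set.Icc a b) x
        = derivWithin (derivWithin f (Set.Icc a b)) (Set.Icc a b) x := by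
      rw [iteratedDerivWithin_succ]
      apply derivWithin_congr
      · intro y hy
        exact congrFun iteratedDerivWithin_one y
      · exact congrFun iteratedDerivWithin_one x
    rw [h4]
    exact h3



/-- Monotonicity in the frequency on the right interval: for `0 ≤ ν < 1/2`, `ε ∈ (0,1)` and
positive integers `n₁ < n₂`, the solutions `fᵢ` of `fᵢ'' = (2/(x²−ν²) + (1−ε)²nᵢ²) fᵢ`
on `[1/2,1]` with `fᵢ(1)=0`, `fᵢ(1/2)=1` satisfy `f₁ > f₂` on `(1/2,1)` and both are
strictly positive on `[1/2,1)`. -/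
theorem statement10 (ε ν : ℝ) (hε : ε ∈ Set.Ioo (0:ℝ) 1) (hν : 0 ≤ ν) (hν' : ν < 1 / 2)
    (n₁ n₂ : ℕ) (hn₁ : 0 < n₁) (hn : n₁ < n₂) (f₁ f₂ : ℝ → ℝ)
    (hf₁ : ContDiffOn ℝ 2 f₁ (Set.Icc (1 / 2) 1))
    (hf₂ : ContDiffOn ℝ 2 f₂ (Set.Icc (1 / 2) 1))
    (hode₁ : ∀ x ∈ Set.Icc (1 / 2 : ℝ) 1,
      iteratedDerivWithin 2 f₁ (Set.Icc (1 / 2) 1) x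
        = (2 / (x ^ 2 - ν ^ 2) + (1 - ε) ^ 2 * (n₁ : ℝ) ^ 2) * f₁ x)
    (hode₂ : ∀ x ∈ Set.Icc (1 / 2 : ℝ) 1,
      iteratedDerivWithin 2 f₂ (Set.Icc (1 / 2) 1) x
        = (2 / (x ^ 2 - ν ^ 2) + (1 - ε) ^ 2 * (n₂ : ℝ) ^ 2) * f₂ x)
    (h₁1 : f₁ 1 = 0) (h₁12 : f₁ (1 / 2) = 1)
    (h₂1 : f₂ 1 = 0) (h₂12 : f₂ (1 / 2) = 1) :
    (∀ x ∈ Set.Ioo (1 / 2 : ℝ) 1, f₂ x < f₁ x) ∧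
    (∀ x ∈ Set.Ico (1 / 2 : ℝ) 1, 0 < f₁ x ∧ 0 < f₂ x) := by
  have hab : (1/2 : ℝ) < 1 := by norm_num
  set q₁ : ℝ → ℝ := fun x => 2 / (x ^ 2 - ν ^ 2) + (1 - ε) ^ 2 * (n₁ : ℝ) ^ 2 with hq₁def
  set q₂ : ℝ → ℝ := fun x => 2 / (x ^ 2 - ν ^ 2) + (1 - ε) ^ 2 * (n₂ : ℝ) ^ 2 with hq₂def
  have hden : ∀ x ∈ Set.Icc (1/2 : ℝ) 1, 0 < x ^ 2 - ν ^ 2 := by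
    intro x hx; nlinarith [hx.1]
  have hqc : ∀ (C : ℝ), ContinuousOn (fun x => 2 / (x ^ 2 - ν ^ 2) + C) (Set.Icc (1/2 : ℝ) 1) := by
    intro C
    apply ContinuousOn.add _ continuousOn_const
    exact ContinuousOn.div continuousOn_const (by fun_prop) fun x hx => ne_of_gt (hden x hx)
  have hq₁c : ContinuousOn q₁ (Set.Icc (1/2 : ℝ) 1) := hqc _
  have hq₂c : ContinuousOn q₂ (Set.Icc (1/2 : ℝ) 1) := hqc _
  have hq₁pos : ∀ x ∈ Set.Icc (1/2 : ℝ) 1, 0 < q₁ x := by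
    intro x hx
    have := hden x hx
    have h2 : 0 < 2 / (x ^ 2 - ν ^ 2) := by positivity
    have h3 : (0:ℝ) ≤ (1 - ε) ^ 2 * (n₁ : ℝ) ^ 2 := by positivity
    simp only [hq₁def]; linarith
  have hq₂pos : ∀ x ∈ Set.Icc (1/2 : ℝ) 1, 0 < q₂ x := by
    intro x hx
    have := hden x hx
    have h2 : 0 < 2 / (x ^ 2 - ν ^ 2) := by positivity
    have h3 : (0:ℝ) ≤ (1 - ε) ^ 2 * (n₂ : ℝ) ^ 2 := by positivity
    simp only [hq₂def]; linarith
  have hq12 : ∀ x : ℝ, q₁ x < q₂ x := by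
    intro x
    simp only [hq₁def, hq₂def, add_lt_add_iff_left]
    have hε1 : 0 < (1 - ε) ^ 2 := by nlinarith [hε.2]
    have hn' : (n₁ : ℝ) ^ 2 < (n₂ : ℝ) ^ 2 := by
      have : (n₁ : ℝ) < (n₂ : ℝ) := by exact_mod_cast hn
      nlinarith [Nat.cast_nonneg (α := ℝ) n₁]
    nlinarith
  obtain ⟨g₁, hg₁c, hf₁', hg₁'⟩ := ode_derivs hab hf₁
  obtain ⟨g₂, hg₂c, hf₂', hg₂'⟩ := ode_derivs hab hf₂
  have hg₁' : ∀ x ∈ Set.Ioo (1/2 : ℝ) 1, HasDerivAt g₁ (q₁ x * f₁ x) x := by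
    intro x hx
    have := hg₁' x hx
    rwa [hode₁ x (Set.Ioo_subset_Icc_self hx)] at this
  have hg₂' : ∀ x ∈ Set.Ioo (1/2 : ℝ) 1, HasDerivAt g₂ (q₂ x * f₂ x) x := by
    intro x hx
    have := hg₂' x hx
    rwa [hode₂ x (Set.Ioo_subset_Icc_self hx)] at this
  have hf₁c : ContinuousOn f₁ (Set.Icc (1/2 : ℝ) 1) := hf₁.continuousOn
  have hf₂c : ContinuousOn f₂ (Set.Icc (1/2 : ℝ) 1) := hf₂.continuousOn
  have hpos₁ : ∀ x ∈ Set.Ico (1/2 : ℝ) 1, 0 < f₁ x :=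
    ode_pos hab hq₁c hq₁pos hf₁c hg₁c hf₁' hg₁' h₁1 (by rw [h₁12]; norm_num)
  have hpos₂ : ∀ x ∈ Set.Ico (1/2 : ℝ) 1, 0 < f₂ x :=
    ode_pos hab hq₂c hq₂pos hf₂c hg₂c hf₂' hg₂' h₂1 (by rw [h₂12]; norm_num)
  refine ⟨?_, fun x hx => ⟨hpos₁ x hx, hpos₂ x hx⟩⟩
  -- Wronskian
  set W : ℝ → ℝ := fun x => g₁ x * f₂ x - f₁ x * g₂ x with hWdef
  have hWc : ContinuousOn W (Set.Icc (1/2 : ℝ) 1) := (hg₁c.mul hf₂c).sub (hf₁c.mul hg₂c)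
  have hW' : ∀ x ∈ Set.Ioo (1/2 : ℝ) 1,
      HasDerivAt W ((q₁ x - q₂ x) * (f₁ x * f₂ x)) x := by
    intro x hx
    have h := ((hg₁' x hx).mul (hf₂' x hx)).sub ((hf₁' x hx).mul (hg₂' x hx))
    refine h.congr_deriv ?_
    ring
  have hWanti : StrictAntiOn W (Set.Icc (1/2 : ℝ) 1) := by
    apply strictAntiOn_of_deriv_neg (convex_Icc _ _) hWc
    intro x hx
    rw [interior_Icc] at hx
    rw [(hW' x hx).deriv]
    exact mul_neg_of_neg_of_pos (sub_neg.2 (hq12 x))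
      (mul_pos (hpos₁ x ⟨hx.1.le, hx.2⟩) (hpos₂ x ⟨hx.1.le, hx.2⟩))
  have hWb : W 1 = 0 := by simp [hWdef, h₁1, h₂1]
  have hWpos : ∀ x ∈ Set.Ico (1/2 : ℝ) 1, 0 < W x := by
    intro x hx
    have := hWanti (Set.Ico_subset_Icc_self hx) (Set.right_mem_Icc.2 (le_of_lt hab)) hx.2
    rwa [hWb] at this
  intro x hx
  have hsub : Set.Icc (1/2 : ℝ) x ⊆ Set.Ico (1/2 : ℝ) 1 := fun y hy =>
    ⟨hy.1, lt_of_le_of_lt hy.2 hx.2⟩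
  have hsub' : Set.Icc (1/2 : ℝ) x ⊆ Set.Icc (1/2 : ℝ) 1 :=
    hsub.trans Set.Ico_subset_Icc_self
  have hmono : StrictMonoOn (fun y => f₁ y / f₂ y) (Set.Icc (1/2 : ℝ) x) := by
    apply strictMonoOn_of_deriv_pos (convex_Icc _ _)
    · exact ContinuousOn.div (hf₁c.mono hsub') (hf₂c.mono hsub')
        fun y hy => ne_of_gt (hpos₂ y (hsub hy))
    · intro y hy
      rw [interior_Icc] at hy
      have hy' : y ∈ Set.Ioo (1/2 : ℝ) 1 := ⟨hy.1, lt_trans hy.2 hx.2⟩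
      have hy'' : y ∈ Set.Ico (1/2 : ℝ) 1 := ⟨hy.1.le, hy'.2⟩
      have hd := (hf₁' y hy').div (hf₂' y hy') (ne_of_gt (hpos₂ y hy''))
      rw [show (fun y => f₁ y / f₂ y) = f₁ / f₂ from rfl, hd.deriv]
      exact div_pos (hWpos y hy'') (pow_pos (hpos₂ y hy'') 2)
  have := hmono (Set.left_mem_Icc.2 hx.1.le) (Set.right_mem_Icc.2 hx.1.le) hx.1
  simp only [h₁12, h₂12] at this
  norm_num at this
  have hx2 : 0 < f₂ x := hpos₂ x ⟨hx.1.le, hx.2⟩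
  exact (one_lt_div hx2).1 this
end

section
/- Let 0 ≤ ν < 1/2 and p₁, p₂ > 0. For i = 1,2 let f_i ∈ C²([1/2,1]) satisfy f_i''(x) = ( 2/(x²−ν²) + p_i² ) f_i(x) for all x ∈ [1/2,1], with f_i(1) = 0 and f_i(1/2) = 1. Then f₁'(1/2) − f₂'(1/2) = (p₂² − p₁²) ∫_{1/2}^1 f₁(w) f₂(w) dw. In particular, if additionally f₁'(1) < 0 and f₂'(1) < 0 and p₁ < p₂, then f₁'(1/2) > f₂'(1/2). -/
open Set Filter Topology

private lemma udOn12 : UniqueDiffOn ℝ (Set.Icc (1/2:ℝ) 1) := uniqueDiffOn_Icc (by norm_num)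

/-- At interior points, `f` and its `derivWithin` have the natural derivatives. -/
private lemma aux_has {f : ℝ → ℝ} (hf : ContDiffOn ℝ 2 f (Set.Icc (1/2) 1)) {x : ℝ}
    (hx : x ∈ Set.Ioo (1/2:ℝ) 1) :
    HasDerivAt f (derivWithin f (Set.Icc (1/2) 1) x) x ∧
    HasDerivAt (derivWithin f (Set.Icc (1/2) 1))
      (iteratedDerivWithin 2 f (Set.Icc (1/2) 1) x) x := by
  have hs : Set.Icc (1/2:ℝ) 1 ∈ 𝓝 x := Icc_mem_nhds hx.1 hx.2
  have hxs : x ∈ Set.Icc (1/2:ℝ) 1 := Set.Ioo_subset_Icc_self hx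
  have hfd : DifferentiableAt ℝ f x :=
    ((hf.differentiableOn (by norm_num)) x hxs).differentiableAt hs
  have hg : ContDiffOn ℝ 1 (derivWithin f (Set.Icc (1/2) 1)) (Set.Icc (1/2) 1) :=
    hf.derivWithin udOn12 (by norm_num)
  have hgd : DifferentiableAt ℝ (derivWithin f (Set.Icc (1/2) 1)) x :=
    ((hg.differentiableOn (by norm_num)) x hxs).differentiableAt hs
  constructor
  · rw [derivWithin_of_mem_nhds hs]; exact hfd.hasDerivAt
  · have h2 : iteratedDerivWithin 2 f (Set.Icc (1/2) 1) x
        = derivWithin (derivWithin f (Set.Icc (1/2) 1)) (Set.Icc (1/2) 1) x := by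
      rw [iteratedDerivWithin_succ]
      apply derivWithin_congr
      · intro y hy; exact congrFun iteratedDerivWithin_one y
      · exact congrFun iteratedDerivWithin_one x
    rw [h2, derivWithin_of_mem_nhds hs]
    exact hgd.hasDerivAt

/-- At interior points, `deriv (deriv f)` agrees with `iteratedDerivWithin 2`. -/
private lemma aux_diff {f : ℝ → ℝ} (hf : ContDiffOn ℝ 2 f (Set.Icc (1/2) 1)) {x : ℝ}
    (hx : x ∈ Set.Ioo (1/2:ℝ) 1) :
    DifferentiableAt ℝ f x ∧ DifferentiableAt ℝ (deriv f) x ∧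
      deriv (deriv f) x = iteratedDerivWithin 2 f (Set.Icc (1/2) 1) x := by
  have hs : Set.Icc (1/2:ℝ) 1 ∈ 𝓝 x := Icc_mem_nhds hx.1 hx.2
  have hxs : x ∈ Set.Icc (1/2:ℝ) 1 := Set.Ioo_subset_Icc_self hx
  have hfd : DifferentiableAt ℝ f x :=
    ((hf.differentiableOn (by norm_num)) x hxs).differentiableAt hs
  have heq : derivWithin f (Set.Icc (1/2) 1) =ᶠ[𝓝 x] deriv f := by
    filter_upwards [Ioo_mem_nhds hx.1 hx.2] with y hy
    exact derivWithin_of_mem_nhds (Icc_mem_nhds hy.1 hy.2)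
  have hgd : DifferentiableAt ℝ (derivWithin f (Set.Icc (1/2) 1)) x :=
    (aux_has hf hx).2.differentiableAt
  refine ⟨hfd, ?_, ?_⟩
  · exact hgd.congr_of_eventuallyEq heq.symm
  · rw [← heq.deriv_eq]
    exact (aux_has hf hx).2.deriv.symm ▸ ((aux_has hf hx).2.deriv)

/-- Concavity with zero boundary values gives nonnegativity. -/
private lemma aux_comb {f : ℝ → ℝ} {a b c : ℝ} (hab : a < b) (hc : c ∈ Set.Icc a b)
    (hfa : f a = 0) (hfb : f b = 0) (hconc : ConcaveOn ℝ (Set.Icc a b) f) : 0 ≤ f c := by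
  obtain ⟨hac, hcb⟩ := hc
  have h0 : (0:ℝ) < b - a := by linarith
  set t := (b - c)/(b - a) with ht
  have ht0 : 0 ≤ t := div_nonneg (by linarith) h0.le
  have ht1 : 0 ≤ 1 - t := by
    have : t ≤ 1 := (div_le_one h0).2 (by linarith)
    linarith
  have key := hconc.2 (Set.left_mem_Icc.2 hab.le) (Set.right_mem_Icc.2 hab.le) ht0 ht1
    (by ring)
  have hcc : t • a + (1 - t) • b = c := by
    simp only [smul_eq_mul, ht]
    field_simp
    ring
  rw [hcc, hfa, hfb] at key
  simpa using key

/-- Positivity of the ODE solution on `[1/2, 1)`. -/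
private lemma aux_pos {ν p : ℝ} (hν : 0 ≤ ν) (hν' : ν < 1/2) {f : ℝ → ℝ}
    (hf : ContDiffOn ℝ 2 f (Set.Icc (1/2) 1))
    (hode : ∀ x ∈ Set.Icc (1/2:ℝ) 1,
      iteratedDerivWithin 2 f (Set.Icc (1/2) 1) x = (2/(x^2 - ν^2) + p^2) * f x)
    (h1 : f 1 = 0) (h12 : f (1/2) = 1)
    (hd1 : derivWithin f (Set.Icc (1/2) 1) 1 < 0) :
    ∀ x ∈ Set.Ico (1/2:ℝ) 1, 0 < f x := by
  have hcont : ContinuousOn f (Set.Icc (1/2) 1) := hf.continuousOn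
  have hq : ∀ x ∈ Set.Icc (1/2:ℝ) 1, 0 < 2/(x^2 - ν^2) + p^2 := by
    intro x hx
    have h1 : 0 < x^2 - ν^2 := by nlinarith [hx.1, hx.2]
    have := div_pos (by norm_num : (0:ℝ) < 2) h1
    nlinarith [sq_nonneg p]
  by_contra hcon
  push_neg at hcon
  obtain ⟨x₀, hx₀, hfx₀⟩ := hcon
  by_cases hneg : ∃ c ∈ Set.Ioo (1/2:ℝ) 1, f c < 0
  · -- there is a strictly negative value: get a concave negative bump, contradiction
    obtain ⟨c, hc, hfc⟩ := hneg
    have hcIcc : c ∈ Set.Icc (1/2:ℝ) 1 := Set.Ioo_subset_Icc_self hc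
    -- zero set to the left of c
    set Z₁ : Set ℝ := Set.Icc (1/2) c ∩ f ⁻¹' {0} with hZ₁
    have hZ₁closed : IsClosed Z₁ :=
      (hcont.mono (Set.Icc_subset_Icc le_rfl hc.2.le)).preimage_isClosed_of_isClosed
        isClosed_Icc isClosed_singleton
    have hZ₁ne : Z₁.Nonempty := by
      have := intermediate_value_Icc' hc.1.le (hcont.mono (Set.Icc_subset_Icc le_rfl hc.2.le))
      have h0 : (0:ℝ) ∈ Set.Icc (f c) (f (1/2)) := ⟨hfc.le, by rw [h12]; norm_num⟩
      obtain ⟨a₀, ha₀, ha₀'⟩ := this h0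
      exact ⟨a₀, ha₀, by simpa using ha₀'⟩
    have hZ₁cpt : IsCompact Z₁ :=
      isCompact_Icc.of_isClosed_subset hZ₁closed Set.inter_subset_left
    set a := sSup Z₁ with ha
    have haZ : a ∈ Z₁ := hZ₁cpt.sSup_mem hZ₁ne
    have hfa : f a = 0 := haZ.2
    have hac : a < c := lt_of_le_of_ne haZ.1.2 (by intro h; rw [h] at hfa; linarith)
    have h12a : 1/2 < a := lt_of_le_of_ne haZ.1.1 (by intro h; rw [← h] at hfa; rw [h12] at hfa; linarith)
    -- zero set to the right of c
    set Z₂ : Set ℝ := Set.Icc c 1 ∩ f ⁻¹' {0} with hZ₂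
    have hZ₂closed : IsClosed Z₂ :=
      (hcont.mono (Set.Icc_subset_Icc hc.1.le le_rfl)).preimage_isClosed_of_isClosed
        isClosed_Icc isClosed_singleton
    have hZ₂ne : Z₂.Nonempty := ⟨1, ⟨hc.2.le, le_rfl⟩, by simpa using h1⟩
    have hZ₂cpt : IsCompact Z₂ :=
      isCompact_Icc.of_isClosed_subset hZ₂closed Set.inter_subset_left
    set b := sInf Z₂ with hb
    have hbZ : b ∈ Z₂ := hZ₂cpt.sInf_mem hZ₂ne
    have hfb : f b = 0 := hbZ.2
    have hcb : c < b := lt_of_le_of_ne hbZ.1.1 (by intro h; rw [← h] at hfb; linarith)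
    have hb1 : b ≤ 1 := hbZ.1.2
    have hab : a < b := hac.trans hcb
    -- f ≤ 0 on [a, b]
    have hnonpos : ∀ y ∈ Set.Icc a b, f y ≤ 0 := by
      intro y hy
      rcases le_or_gt y c with hyc | hcy
      · rcases eq_or_lt_of_le hy.1 with h | h
        · rw [← h, hfa]
        · by_contra hpos
          push_neg at hpos
          have hIVT := intermediate_value_Icc' hyc
            (hcont.mono (Set.Icc_subset_Icc (by linarith) hc.2.le))
          obtain ⟨w, hw, hfw⟩ := hIVT (⟨hfc.le, hpos.le⟩ : (0:ℝ) ∈ Set.Icc (f c) (f y))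
          have hwZ : w ∈ Z₁ := ⟨⟨by linarith [hw.1], hw.2⟩, by simpa using hfw⟩
          have : w ≤ a := le_csSup hZ₁cpt.bddAbove hwZ
          linarith [hw.1]
      · rcases eq_or_lt_of_le hy.2 with h | h
        · rw [h, hfb]
        · by_contra hpos
          push_neg at hpos
          have hIVT := intermediate_value_Icc hcy.le
            (hcont.mono (Set.Icc_subset_Icc hc.1.le (by linarith)))
          obtain ⟨w, hw, hfw⟩ := hIVT (⟨hfc.le, hpos.le⟩ : (0:ℝ) ∈ Set.Icc (f c) (f y))
          have hwZ : w ∈ Z₂ := ⟨⟨hw.1, by linarith [hw.2]⟩, by simpa using hfw⟩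
          have : b ≤ w := csInf_le hZ₂cpt.bddBelow hwZ
          linarith [hw.2]
    -- concavity on [a, b]
    have hsub : Set.Icc a b ⊆ Set.Icc (1/2) 1 := Set.Icc_subset_Icc h12a.le hb1
    have hIoo : Set.Ioo a b ⊆ Set.Ioo (1/2:ℝ) 1 := fun y hy => ⟨h12a.trans hy.1, lt_of_lt_of_le hy.2 hb1⟩
    have hconc : ConcaveOn ℝ (Set.Icc a b) f := by
      apply concaveOn_of_deriv2_nonpos (convex_Icc a b) (hcont.mono hsub)
      · rw [interior_Icc]
        exact fun y hy => ((aux_diff hf (hIoo hy)).1).differentiableWithinAt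
      · rw [interior_Icc]
        exact fun y hy => ((aux_diff hf (hIoo hy)).2.1).differentiableWithinAt
      · rw [interior_Icc]
        intro y hy
        have h2 : deriv^[2] f y = deriv (deriv f) y := by
          simp [Function.iterate_succ, Function.iterate_zero, Function.comp]
        rw [h2, (aux_diff hf (hIoo hy)).2.2, hode y (Set.Ioo_subset_Icc_self (hIoo hy))]
        exact mul_nonpos_of_nonneg_of_nonpos (hq y (Set.Ioo_subset_Icc_self (hIoo hy))).le
          (hnonpos y (Set.Ioo_subset_Icc_self hy))
    have := aux_comb hab ⟨hac.le, hcb.le⟩ hfa hfb hconc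
    linarith
  · -- f ≥ 0 everywhere: convexity forces f ≡ 0 near 1, contradicting f'(1) < 0
    push_neg at hneg
    have hpos : ∀ y ∈ Set.Icc (1/2:ℝ) 1, 0 ≤ f y := by
      intro y hy
      rcases eq_or_lt_of_le hy.1 with h | h
      · rw [← h, h12]; norm_num
      · rcases eq_or_lt_of_le hy.2 with h' | h'
        · rw [h', h1]
        · exact hneg y ⟨h, h'⟩
    have hfx₀0 : f x₀ = 0 := le_antisymm hfx₀ (hpos x₀ ⟨hx₀.1, hx₀.2.le⟩)
    have hx₀half : 1/2 < x₀ := by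
      rcases eq_or_lt_of_le hx₀.1 with h | h
      · exfalso; rw [← h, h12] at hfx₀0; linarith
      · exact h
    have hconv : ConvexOn ℝ (Set.Icc (1/2:ℝ) 1) f := by
      apply convexOn_of_deriv2_nonneg (convex_Icc _ _) hcont
      · rw [interior_Icc]
        exact fun y hy => ((aux_diff hf hy).1).differentiableWithinAt
      · rw [interior_Icc]
        exact fun y hy => ((aux_diff hf hy).2.1).differentiableWithinAt
      · rw [interior_Icc]
        intro y hy
        have h2 : deriv^[2] f y = deriv (deriv f) y := by
          simp [Function.iterate_succ, Function.iterate_zero, Function.comp]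
        rw [h2, (aux_diff hf hy).2.2, hode y (Set.Ioo_subset_Icc_self hy)]
        exact mul_nonneg (hq y (Set.Ioo_subset_Icc_self hy)).le
          (hpos y (Set.Ioo_subset_Icc_self hy))
    have hzero : ∀ y ∈ Set.Icc x₀ 1, f y = 0 := by
      intro y hy
      have hsub : Set.Icc x₀ (1:ℝ) ⊆ Set.Icc (1/2) 1 := Set.Icc_subset_Icc hx₀.1 le_rfl
      have hconc : ConcaveOn ℝ (Set.Icc x₀ 1) (-f) := (hconv.subset hsub (convex_Icc _ _)).neg
      have h := aux_comb hx₀.2 hy (by simp [hfx₀0]) (by simp [h1]) hconc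
      have h' := hpos y (hsub hy)
      simp only [Pi.neg_apply] at h
      linarith
    have hev : f =ᶠ[𝓝[Set.Icc (1/2:ℝ) 1] 1] fun _ => 0 := by
      filter_upwards [self_mem_nhdsWithin,
        mem_nhdsWithin_of_mem_nhds (Ioi_mem_nhds hx₀.2)] with y hy hy'
      exact hzero y ⟨le_of_lt hy', hy.2⟩
    have := hev.derivWithin_eq (by simpa using h1)
    have hud : UniqueDiffWithinAt ℝ (Set.Icc (1/2:ℝ) 1) 1 :=
      udOn12 1 (by norm_num : (1:ℝ) ∈ Set.Icc (1/2:ℝ) 1)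
    have hz : derivWithin (fun _ : ℝ => (0:ℝ)) (Set.Icc (1/2:ℝ) 1) 1 = 0 :=
      congrFun (derivWithin_const _ _) 1
    rw [this, hz] at hd1
    exact absurd hd1 (lt_irrefl 0)

/-- Wronskian identity on the right interval: for `0 ≤ ν < 1/2`, `p₁, p₂ > 0` and solutions
`fᵢ` of `fᵢ'' = (2/(x²−ν²) + pᵢ²) fᵢ` on `[1/2,1]` with `fᵢ(1)=0`, `fᵢ(1/2)=1`, one has
`f₁'(1/2) − f₂'(1/2) = (p₂² − p₁²) ∫_{1/2}^1 f₁ f₂`; in particular if moreover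
`f₁'(1) < 0`, `f₂'(1) < 0` and `p₁ < p₂`, then `f₁'(1/2) > f₂'(1/2)`. -/
theorem statement12 (ν p₁ p₂ : ℝ) (hν : 0 ≤ ν) (hν' : ν < 1 / 2) (hp₁ : 0 < p₁) (hp₂ : 0 < p₂)
    (f₁ f₂ : ℝ → ℝ)
    (hf₁ : ContDiffOn ℝ 2 f₁ (Set.Icc (1 / 2) 1))
    (hf₂ : ContDiffOn ℝ 2 f₂ (Set.Icc (1 / 2) 1))
    (hode₁ : ∀ x ∈ Set.Icc (1 / 2 : ℝ) 1,
      iteratedDerivWithin 2 f₁ (Set.Icc (1 / 2) 1) x = (2 / (x ^ 2 - ν ^ 2) + p₁ ^ 2) * f₁ x)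
    (hode₂ : ∀ x ∈ Set.Icc (1 / 2 : ℝ) 1,
      iteratedDerivWithin 2 f₂ (Set.Icc (1 / 2) 1) x = (2 / (x ^ 2 - ν ^ 2) + p₂ ^ 2) * f₂ x)
    (h₁1 : f₁ 1 = 0) (h₁12 : f₁ (1 / 2) = 1)
    (h₂1 : f₂ 1 = 0) (h₂12 : f₂ (1 / 2) = 1) :
    derivWithin f₁ (Set.Icc (1 / 2) 1) (1 / 2) - derivWithin f₂ (Set.Icc (1 / 2) 1) (1 / 2)
      = (p₂ ^ 2 - p₁ ^ 2) * ∫ w in (1 / 2 : ℝ)..1, f₁ w * f₂ w ∧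
    (derivWithin f₁ (Set.Icc (1 / 2) 1) 1 < 0 → derivWithin f₂ (Set.Icc (1 / 2) 1) 1 < 0 →
      p₁ < p₂ →
      derivWithin f₂ (Set.Icc (1 / 2) 1) (1 / 2) < derivWithin f₁ (Set.Icc (1 / 2) 1) (1 / 2)) := by
  set s : Set ℝ := Set.Icc (1 / 2) 1 with hsdef
  set g₁ := derivWithin f₁ s with hg₁
  set g₂ := derivWithin f₂ s with hg₂
  set W : ℝ → ℝ := fun x => g₁ x * f₂ x - f₁ x * g₂ x with hW
  -- derivative of the Wronskian
  have hWd : ∀ x ∈ Set.Ioo (1/2:ℝ) 1,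
      HasDerivAt W ((p₁^2 - p₂^2) * (f₁ x * f₂ x)) x := by
    intro x hx
    have hxs : x ∈ s := Set.Ioo_subset_Icc_self hx
    have H := (((aux_has hf₁ hx).2.mul (aux_has hf₂ hx).1).sub
      ((aux_has hf₁ hx).1.mul (aux_has hf₂ hx).2))
    refine H.congr_deriv ?_
    have e1 := hode₁ x hxs
    have e2 := hode₂ x hxs
    rw [hsdef] at e1 e2
    rw [e1, e2]
    ring
  -- continuity of the Wronskian
  have hg₁' : ContDiffOn ℝ 1 g₁ s := hf₁.derivWithin udOn12 (by norm_num)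
  have hg₂' : ContDiffOn ℝ 1 g₂ s := hf₂.derivWithin udOn12 (by norm_num)
  have hg₁c : ContinuousOn g₁ s := hg₁'.continuousOn
  have hg₂c : ContinuousOn g₂ s := hg₂'.continuousOn
  have hWcont : ContinuousOn W s :=
    (hg₁c.mul hf₂.continuousOn).sub (hf₁.continuousOn.mul hg₂c)
  -- integrability
  have hffc : ContinuousOn (fun x => f₁ x * f₂ x) s := hf₁.continuousOn.mul hf₂.continuousOn
  have hffint : IntervalIntegrable (fun x => f₁ x * f₂ x) MeasureTheory.volume (1/2) 1 := by
    apply ContinuousOn.intervalIntegrable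
    rwa [Set.uIcc_of_le (by norm_num : (1:ℝ)/2 ≤ 1)]
  have hint : IntervalIntegrable (fun x => (p₁^2 - p₂^2) * (f₁ x * f₂ x))
      MeasureTheory.volume (1/2) 1 := by
    apply ContinuousOn.intervalIntegrable
    rw [Set.uIcc_of_le (by norm_num : (1:ℝ)/2 ≤ 1)]
    exact continuousOn_const.mul hffc
  -- FTC
  have hFTC := intervalIntegral.integral_eq_sub_of_hasDeriv_right_of_le
    (by norm_num : (1:ℝ)/2 ≤ 1) hWcont
    (fun x hx => (hWd x hx).hasDerivWithinAt) hint
  rw [intervalIntegral.integral_const_mul] at hFTC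
  have hW1 : W 1 = 0 := by simp [hW, h₁1, h₂1]
  have hW12 : W (1/2) = g₁ (1/2) - g₂ (1/2) := by
    show g₁ (1/2) * f₂ (1/2) - f₁ (1/2) * g₂ (1/2) = _
    rw [h₁12, h₂12]; ring
  rw [hW1, hW12] at hFTC
  have key : g₁ (1/2) - g₂ (1/2) = (p₂^2 - p₁^2) * ∫ w in (1/2:ℝ)..1, f₁ w * f₂ w := by
    linear_combination hFTC
  refine ⟨key, ?_⟩
  intro hd₁ hd₂ hplt
  have hpos₁ := aux_pos hν hν' hf₁ hode₁ h₁1 h₁12 hd₁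
  have hpos₂ := aux_pos hν hν' hf₂ hode₂ h₂1 h₂12 hd₂
  have hI : 0 < ∫ w in (1/2:ℝ)..1, f₁ w * f₂ w := by
    apply intervalIntegral.intervalIntegral_pos_of_pos_on hffint _ (by norm_num)
    intro x hx
    exact mul_pos (hpos₁ x ⟨hx.1.le, hx.2⟩) (hpos₂ x ⟨hx.1.le, hx.2⟩)
  have hpp : 0 < p₂^2 - p₁^2 := by nlinarith
  have := mul_pos hpp hI
  linarith [key]
end

section
/- Let 0 ≤ ν < 1/2 and p > 0, and let f ∈ C²([1/2,1]) satisfy f''(x) = ( 2/(x²−ν²) + p² ) f(x) for all x ∈ [1/2,1], with f(1) = 0 and f(1/2) = 1. Then ∫_{1/2}^1 sinh(p(1−w)) f(w) / (w² − ν²) dw = −(1/2) sinh(p/2) f'(1/2) − (p/2) cosh(p/2). -/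
/-- Integration-by-parts identity on the right interval: for `0 ≤ ν < 1/2`, `p > 0` and `f`
solving `f'' = (2/(x²−ν²) + p²) f` on `[1/2,1]` with `f(1)=0`, `f(1/2)=1`, one has
`∫_{1/2}^1 sinh(p(1−w)) f(w)/(w²−ν²) dw = −(1/2) sinh(p/2) f'(1/2) − (p/2) cosh(p/2)`. -/
theorem statement14 (ν p : ℝ) (hν : 0 ≤ ν) (hν' : ν < 1 / 2) (hp : 0 < p) (f : ℝ → ℝ)
    (hf : ContDiffOn ℝ 2 f (Set.Icc (1 / 2) 1))
    (hode : ∀ x ∈ Set.Icc (1 / 2 : ℝ) 1,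
      iteratedDerivWithin 2 f (Set.Icc (1 / 2) 1) x = (2 / (x ^ 2 - ν ^ 2) + p ^ 2) * f x)
    (h1 : f 1 = 0) (h12 : f (1 / 2) = 1) :
    ∫ w in (1 / 2 : ℝ)..1, Real.sinh (p * (1 - w)) * f w / (w ^ 2 - ν ^ 2)
      = -((1 / 2) * Real.sinh (p / 2) * derivWithin f (Set.Icc (1 / 2) 1) (1 / 2))
        - (p / 2) * Real.cosh (p / 2) := by
  set s : Set ℝ := Set.Icc (1 / 2) 1 with hs
  have hab : (1 / 2 : ℝ) ≤ 1 := by norm_num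
  have hus : UniqueDiffOn ℝ s := uniqueDiffOn_Icc (by norm_num)
  set f1 : ℝ → ℝ := derivWithin f s with hf1def
  have hden : ∀ x ∈ s, x ^ 2 - ν ^ 2 ≠ 0 := by
    intro x hx
    have hx1 : (1 / 2 : ℝ) ≤ x := hx.1
    have : ν ^ 2 < x ^ 2 := by nlinarith
    linarith
  have hdf : DifferentiableOn ℝ f s := hf.differentiableOn (by norm_num)
  have hcf1 : ContDiffOn ℝ 1 f1 s := hf.derivWithin hus (by norm_num)
  have hdf1 : DifferentiableOn ℝ f1 s := hcf1.differentiableOn (by norm_num)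
  -- second derivative
  have hsecond : ∀ x ∈ s, derivWithin f1 s x = (2 / (x ^ 2 - ν ^ 2) + p ^ 2) * f x := by
    intro x hx
    rw [← hode x hx, show (2 : ℕ) = 1 + 1 from rfl, iteratedDerivWithin_succ',
      iteratedDerivWithin_one]
  set F : ℝ → ℝ := fun w =>
    (1 / 2) * (Real.sinh (p * (1 - w)) * f1 w + p * Real.cosh (p * (1 - w)) * f w) with hF
  have key : ∀ x ∈ Set.Ioo (1 / 2 : ℝ) 1,
      HasDerivAt F (Real.sinh (p * (1 - x)) * f x / (x ^ 2 - ν ^ 2)) x := by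
    intro x hx
    have hxs : x ∈ s := Set.mem_Icc.2 ⟨hx.1.le, hx.2.le⟩
    have hnhds : s ∈ nhds x := Icc_mem_nhds hx.1 hx.2
    have hu : HasDerivAt (fun w : ℝ => p * (1 - w)) (-p) x := by
      have := ((hasDerivAt_id x).const_sub 1).const_mul p
      simpa using this
    have hg : HasDerivAt (fun w => Real.sinh (p * (1 - w)))
        (Real.cosh (p * (1 - x)) * (-p)) x := (Real.hasDerivAt_sinh _).comp x hu
    have hc : HasDerivAt (fun w => Real.cosh (p * (1 - w)))
        (Real.sinh (p * (1 - x)) * (-p)) x := (Real.hasDerivAt_cosh _).comp x hu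
    have hfx : HasDerivAt f (f1 x) x :=
      ((hdf x hxs).hasDerivWithinAt).hasDerivAt hnhds
    have hf1x : HasDerivAt f1 ((2 / (x ^ 2 - ν ^ 2) + p ^ 2) * f x) x := by
      have := ((hdf1 x hxs).hasDerivWithinAt).hasDerivAt hnhds
      rwa [hsecond x hxs] at this
    have := ((hg.mul hf1x).add ((hc.const_mul p).mul hfx)).const_mul (1 / 2 : ℝ)
    convert this using 1
    · rfl
    · rfl
    · rfl
    have hd := hden x hxs
    field_simp
    ring
  have hlin : Continuous fun w : ℝ => p * (1 - w) :=
    continuous_const.mul (continuous_const.sub continuous_id)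
  have hcont : ContinuousOn F s := by
    apply continuousOn_const.mul
    exact ((Real.continuous_sinh.comp hlin).continuousOn.mul hcf1.continuousOn).add
      (((continuous_const.mul (Real.continuous_cosh.comp hlin)).continuousOn).mul
        hf.continuousOn)
  have hInt : IntervalIntegrable
      (fun w => Real.sinh (p * (1 - w)) * f w / (w ^ 2 - ν ^ 2)) MeasureTheory.volume
      (1 / 2 : ℝ) 1 := by
    apply ContinuousOn.intervalIntegrable
    rw [Set.uIcc_of_le hab]
    exact ((Real.continuous_sinh.comp hlin).continuousOn.mul hf.continuousOn).div
      ((continuous_pow 2).sub continuous_const).continuousOn (fun x hx => hden x hx)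
  have hmain := intervalIntegral.integral_eq_sub_of_hasDerivAt_of_le hab
    hcont key hInt
  rw [hmain]
  have e1 : p * (1 - 1) = 0 := by ring
  have e2 : p * (1 - 1 / 2) = p / 2 := by ring
  simp only [hF, e1, e2, h1, h12, Real.sinh_zero, Real.cosh_zero]
  ring
end

section
/- Fix μ₁ ∈ (−1/2,1/2) and K > 0, and let μ̃₂ : (0,ε₀) → ℝ be any function with |μ̃₂(ε)| ≤ K. For ε ∈ (0,ε₀) set μ̃(ε) = 1/2 + (1/2+μ₁)ε + μ̃₂(ε) ε² log²(ε) and ν̃(ε) = √( μ̃(ε)² − ε/(1−ε) ) (which satisfies ν̃ < 1/2 < μ̃ for ε small). Then, as ε → 0⁺, [ (1/(2μ̃)) log( (μ̃ − 1/2)/(1/2 − ν̃) ) − log( (1/2+μ₁)/(1/2−μ₁) ) − ( μ̃₂(ε)/(1/4 − μ₁²) ) ε log²(ε) ] / ( ε log²(ε) ) → 0. -/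
set_option maxHeartbeats 1000000
open Real Filter


noncomputable section

lemma log_one_add_bound {y : ℝ} (hy : |y| ≤ 1/2) : |Real.log (1+y) - y| ≤ 2*y^2 := by
  have h1 : |(-y)| < 1 := by rw [abs_neg]; linarith
  have h := Real.abs_log_sub_add_sum_range_le h1 1
  rw [show (1:ℝ) - -y = 1 + y by ring] at h
  simp [Finset.sum_range_one] at h
  have h2 : |Real.log (1+y) - y| = |-y + Real.log (1+y)| := by
    rw [abs_sub_comm, show y - Real.log (1+y) = -(-y + Real.log (1+y)) by ring, abs_neg]
  rw [h2]
  refine h.trans ?_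
  have h5 : (1:ℝ)/2 ≤ 1 - |y| := by linarith
  calc y^2 / (1 - |y|) ≤ y^2 / (1/2) := by
        apply div_le_div_of_nonneg_left (by positivity) (by norm_num) h5
    _ = 2 * y^2 := by ring

lemma aux_sq_bound (e c t : ℝ) (he : 0 ≤ e) (hc : 0 ≤ c) (het : e ≤ t) :
    2*(5*e + c)^2 ≤ 4*c^2 + 144*(e*t) := by
  nlinarith [sq_nonneg (c - 5*e), mul_le_mul_of_nonneg_left het he, mul_nonneg hc he]

lemma log_one_sub_abs_bound {B : ℝ} (h0 : 0 < B) (h8 : B ≤ 1/8) :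
    |Real.log (1 + -B)| ≤ 2*B := by
  have hBabs : |(-B)| ≤ 1/2 := by rw [abs_neg, abs_of_pos h0]; linarith
  have hbl3 := log_one_add_bound hBabs
  have h3 := abs_le.mp hbl3
  have hBB : B*B ≤ B*(1/8) := mul_le_mul_of_nonneg_left h8 h0.le
  rw [abs_le]; constructor <;> nlinarith [h3.1, h3.2, hBB]

lemma aux_s2 (A : ℝ) (hA : 0 ≤ A) : (1 - 2*A) * (2*(1/2+A)) ≤ 1 := by
  nlinarith [sq_nonneg A]

lemma key_bound (a b K ε m t L2 : ℝ) (ha : 0 < a) (ha1 : a < 1) (hb : 0 < b)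
    (hab : a + b = 1) (hK : 0 < K) (hε : 0 < ε) (hε2 : ε ≤ 1/16) (hm : |m| ≤ K)
    (hL2 : 1 ≤ L2) (ht : t = ε * L2)
    (ht1 : K * t ≤ a/2) (ht2 : 6*ε + K*t ≤ b/2) :
    |(1/(2*(1/2 + ε*(a + m*t)))
        * Real.log ((ε*(a + m*t)) / (1/2 - Real.sqrt ((1/2 + ε*(a + m*t))^2 - ε/(1-ε))))
      - Real.log (a/b) - m/(a*b)*t) / t|
    ≤ (2*K^2/a^2 + 4*K^2/b^2)*t + (144/b^2 + 3*K/(a*b))*ε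
      + (4 + 5/b + 3*|Real.log a - Real.log b|)/L2 := by
  have hb1 : b < 1 := by linarith
  have hL2pos : (0:ℝ) < L2 := by linarith
  have ht0 : 0 < t := by rw [ht]; positivity
  have hεt : ε ≤ t := by rw [ht]; nlinarith
  have hKt : 0 < K*t := by positivity
  have hmt_abs : |m*t| ≤ K*t := by
    rw [abs_mul, abs_of_pos ht0]
    exact mul_le_mul_of_nonneg_right hm ht0.le
  obtain ⟨hmt_lb, hmt_ub⟩ := abs_le.mp hmt_abs
  have h1ε : (0:ℝ) < 1 - ε := by linarith
  have hamt_lb : a/2 ≤ a + m*t := by linarith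
  have hamt_ub : a + m*t ≤ 3/2 := by linarith
  have hamt0 : 0 < a + m*t := by linarith
  set A := ε*(a+m*t) with hA_def
  set Q := 1/(1-ε) - (a+m*t) - ε*(a+m*t)^2 with hQ_def
  set R := ε/(1-ε) - ε*(a+m*t)^2 with hR_def
  have hdiv : (1:ℝ)/(1-ε) - ε/(1-ε) = 1 := by
    rw [div_sub_div_same, div_self h1ε.ne']
  have hQR : Q = b - m*t + R := by
    rw [hQ_def, hR_def]; linear_combination hdiv - hab
  have hfrac0 : 0 ≤ ε/(1-ε) := by positivity
  have hfrac : ε/(1-ε) ≤ 2*ε := by rw [div_le_iff₀ h1ε]; nlinarith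
  have hsq_amt : (a+m*t)^2 ≤ 9/4 := by nlinarith
  have hsq_amt' : ε*(a+m*t)^2 ≤ ε*(9/4) := mul_le_mul_of_nonneg_left hsq_amt hε.le
  have hsq_amt0 : 0 ≤ ε*(a+m*t)^2 := by positivity
  have hR_ub : R ≤ 2*ε := by rw [hR_def]; linarith
  have hR_lb : -(5*ε) ≤ R := by rw [hR_def]; linarith
  have hA0 : 0 < A := mul_pos hε hamt0
  have hA_ub : A ≤ 3/2*ε := by
    have := mul_le_mul_of_nonneg_left hamt_ub hε.le; rw [hA_def]; linarith
  have hsq : (1/2 + A)^2 - ε/(1-ε) = 1/4 - ε*Q := by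
    rw [hA_def, hQ_def]; ring
  set ν := Real.sqrt ((1/2+A)^2 - ε/(1-ε)) with hν_def
  have hν_eq : ν = Real.sqrt (1/4 - ε*Q) := by rw [hν_def, hsq]
  set B := 1/2 - ν with hB_def
  clear_value A Q R ν B
  have hRabs : |R| ≤ 5*ε := abs_le.mpr ⟨hR_lb, by linarith⟩
  have hQ_lb : b/2 ≤ Q := by rw [hQR]; linarith
  have hQ_ub : Q ≤ 3/2 := by rw [hQR]; linarith
  have hQ0 : 0 < Q := by linarith
  have hεQ32 : ε*Q ≤ 3/2*ε := by
    have := mul_le_mul_of_nonneg_left hQ_ub hε.le; linarith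
  have hεQ_ub : ε*Q ≤ 3/32 := by linarith
  have hεQ0 : 0 < ε*Q := mul_pos hε hQ0
  have hν0 : 0 ≤ ν := by rw [hν_eq]; exact Real.sqrt_nonneg _
  have hνsq : ν^2 = 1/4 - ε*Q := by
    rw [hν_eq]; exact Real.sq_sqrt (by linarith)
  have hνlt : ν < 1/2 := by
    rw [hν_eq]; exact (Real.sqrt_lt' (by norm_num)).mpr (by norm_num; linarith)
  have hνge : 1/3 ≤ ν := by
    rw [hν_eq, show (1:ℝ)/3 = Real.sqrt ((1/3)^2) by rw [Real.sqrt_sq]; norm_num]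
    exact Real.sqrt_le_sqrt (by norm_num; linarith)
  have hB0 : 0 < B := by rw [hB_def]; linarith
  have hBid : B * (1/2 + ν) = ε*Q := by rw [hB_def]; linear_combination -hνsq
  have hB_ub : B ≤ 2*ε := by
    have h56 : B*(5/6) ≤ B*(1/2+ν) :=
      mul_le_mul_of_nonneg_left (by linarith) hB0.le
    rw [hBid] at h56; linarith
  -- log identities
  have hu_abs : |m*t/a| ≤ 1/2 := by
    rw [abs_div, abs_of_pos ha, div_le_iff₀ ha]
    calc |m*t| ≤ K*t := hmt_abs
      _ ≤ 1/2*a := by linarith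
  have hu := abs_le.mp hu_abs
  have h1u : (0:ℝ) < 1 + m*t/a := by linarith [hu.1]
  have hl1 : Real.log (a + m*t) = Real.log a + Real.log (1 + m*t/a) := by
    rw [show a + m*t = a * (1 + m*t/a) by field_simp, Real.log_mul ha.ne' h1u.ne']
  have hRmt_abs : |R - m*t| ≤ 5*ε + K*t := by
    rw [abs_le]; constructor <;> linarith
  have hx_abs : |(R - m*t)/b| ≤ 1/2 := by
    rw [abs_div, abs_of_pos hb, div_le_iff₀ hb]
    calc |R - m*t| ≤ 5*ε + K*t := hRmt_abs
      _ ≤ 1/2*b := by linarith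
  have hx := abs_le.mp hx_abs
  have h1x : (0:ℝ) < 1 + (R - m*t)/b := by linarith [hx.1]
  have hQx : Q = b * (1 + (R - m*t)/b) := by
    rw [hQR]; field_simp; ring
  have hl2 : Real.log Q = Real.log b + Real.log (1 + (R-m*t)/b) := by
    rw [hQx, Real.log_mul hb.ne' h1x.ne']
  have hν12 : (0:ℝ) < 1/2 + ν := by linarith
  have hB_div : B = ε*Q/(1/2+ν) := by
    rw [eq_div_iff hν12.ne']; exact hBid
  have hABval : A / B = (a+m*t) * ((1/2+ν)/Q) := by
    rw [hA_def, hB_div]; field_simp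
  have hlog_main : Real.log (A/B)
      = Real.log a + Real.log (1+m*t/a) + Real.log (1+(-B))
        - Real.log b - Real.log (1+(R-m*t)/b) := by
    rw [hABval, Real.log_mul hamt0.ne' (div_ne_zero hν12.ne' hQ0.ne'),
      Real.log_div hν12.ne' hQ0.ne', hl1, hl2,
      show (1:ℝ)/2+ν = 1 + -B by rw [hB_def]; ring]
    ring
  -- error bounds on logs
  have hbl1 := log_one_add_bound hu_abs
  have hbl2 := log_one_add_bound hx_abs
  have hl3_abs : |Real.log (1+(-B))| ≤ 2*B := log_one_sub_abs_bound hB0 (by linarith)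
  -- the algebraic identity
  have hscal : -(m*t/a) + (R - m*t)/b - R/b + m*t/(a*b) = 0 := by
    field_simp
    linear_combination (-(m*t)) * hab
  have hXid : 1/(2*(1/2+A)) * (Real.log a + Real.log (1+m*t/a) + Real.log (1+(-B))
        - Real.log b - Real.log (1+(R-m*t)/b))
      - (Real.log a - Real.log b) - m/(a*b)*t
      = 1/(2*(1/2+A)) * ((Real.log (1+m*t/a) - m*t/a)
          - (Real.log (1+(R-m*t)/b) - (R-m*t)/b) + Real.log (1+(-B)) - R/b)
        + (1/(2*(1/2+A)) - 1) * ((Real.log a - Real.log b) + m*t/(a*b)) := by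
    linear_combination (-(1/(2*(1/2+A)))) * hscal
  -- bounds on the two brackets
  have h12A : (0:ℝ) < 2*(1/2+A) := by linarith
  have hs0 : (0:ℝ) < 1/(2*(1/2+A)) := by positivity
  have hs1 : 1/(2*(1/2+A)) ≤ 1 := by rw [div_le_one h12A]; linarith
  have hs2 : 1 - 1/(2*(1/2+A)) ≤ 2*A := by
    have h' : 1 - 2*A ≤ 1/(2*(1/2+A)) := by
      rw [le_div_iff₀ h12A]; exact aux_s2 A hA0.le
    linarith
  have eR1 : R/b ≤ 5*ε/b := (div_le_div_iff_of_pos_right hb).mpr (by linarith)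
  have eR2 : -(5*ε/b) ≤ R/b := by
    have h' := (div_le_div_iff_of_pos_right hb).mpr hR_lb
    rw [neg_div] at h'; exact h'
  have hP_abs : |(Real.log (1+m*t/a) - m*t/a)
      - (Real.log (1+(R-m*t)/b) - (R-m*t)/b) + Real.log (1+(-B)) - R/b|
      ≤ 2*(m*t/a)^2 + 2*((R-m*t)/b)^2 + 2*B + 5*ε/b := by
    have e1 := abs_le.mp hbl1
    have e2 := abs_le.mp hbl2
    have e3 := abs_le.mp hl3_abs
    rw [abs_le]; constructor <;> linarith [e1.1, e1.2, e2.1, e2.2, e3.1, e3.2]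
  have hW_abs : |(Real.log a - Real.log b) + m*t/(a*b)|
      ≤ |Real.log a - Real.log b| + K*t/(a*b) := by
    refine (abs_add_le _ _).trans ?_
    have h' : |m*t/(a*b)| ≤ K*t/(a*b) := by
      rw [abs_div, abs_of_pos (mul_pos ha hb)]
      exact (div_le_div_iff_of_pos_right (mul_pos ha hb)).mpr hmt_abs
    linarith
  -- numeric pieces
  have hP1 : 2*(m*t/a)^2 ≤ 2*K^2/a^2*t^2 := by
    rw [div_pow, show 2*K^2/a^2*t^2 = 2*((K*t)^2/(a^2)) by ring,
      show 2*((m*t)^2/a^2) = 2*(m*t)^2/a^2 by ring,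
      show 2*((K*t)^2/(a^2)) = 2*(K*t)^2/a^2 by ring]
    have hsq1 : (m*t)^2 ≤ (K*t)^2 := sq_le_sq' hmt_lb hmt_ub
    exact (div_le_div_iff_of_pos_right (pow_pos ha 2)).mpr (by linarith)
  have hP2 : 2*((R - m*t)/b)^2 ≤ 4*K^2/b^2*t^2 + 144/b^2*(ε*t) := by
    rw [div_pow, show 4*K^2/b^2*t^2 + 144/b^2*(ε*t) = (4*K^2*t^2 + 144*(ε*t))/b^2 by ring,
      show 2*((R-m*t)^2/b^2) = 2*(R-m*t)^2/b^2 by ring]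
    apply (div_le_div_iff_of_pos_right (pow_pos hb 2)).mpr
    have hsq2 : (R-m*t)^2 ≤ (5*ε+K*t)^2 := sq_le_sq' (by linarith) (by linarith)
    have haux := aux_sq_bound ε (K*t) t hε.le hKt.le hεt
    linarith
  have hRHS : ((2*K^2/a^2 + 4*K^2/b^2)*t + (144/b^2 + 3*K/(a*b))*ε
      + (4 + 5/b + 3*|Real.log a - Real.log b|)/L2) * t
      = (2*K^2/a^2)*t^2 + (4*K^2/b^2)*t^2 + (144/b^2)*(ε*t) + (3*K/(a*b))*(ε*t)
        + 4*ε + (5/b)*ε + (3*|Real.log a - Real.log b|)*ε := by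
    rw [ht]; field_simp; ring
  -- final assembly
  rw [abs_div, abs_of_pos ht0, div_le_iff₀ ht0, Real.log_div ha.ne' hb.ne',
    hlog_main, hXid, hRHS]
  have hWnn : 0 ≤ |Real.log a - Real.log b| + K*t/(a*b) :=
    add_nonneg (abs_nonneg _) (le_of_lt (div_pos hKt (mul_pos ha hb)))
  have hPnn := abs_nonneg ((Real.log (1+m*t/a) - m*t/a)
      - (Real.log (1+(R-m*t)/b) - (R-m*t)/b) + Real.log (1+(-B)) - R/b)
  have g1 : 1/(2*(1/2+A))*|(Real.log (1+m*t/a) - m*t/a)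
      - (Real.log (1+(R-m*t)/b) - (R-m*t)/b) + Real.log (1+(-B)) - R/b|
      ≤ 2*(m*t/a)^2 + 2*((R-m*t)/b)^2 + 2*B + 5*ε/b := by
    have h' := mul_le_mul hs1 hP_abs hPnn zero_le_one
    linarith
  have g2 : (1 - 1/(2*(1/2+A)))*|(Real.log a - Real.log b) + m*t/(a*b)|
      ≤ 2*A*(|Real.log a - Real.log b| + K*t/(a*b)) :=
    mul_le_mul hs2 hW_abs (abs_nonneg _) (by linarith)
  have g3 : 2*A*(|Real.log a - Real.log b| + K*t/(a*b))
      ≤ (3*|Real.log a - Real.log b|)*ε + 3*K/(a*b)*(ε*t) := by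
    calc 2*A*(|Real.log a - Real.log b| + K*t/(a*b))
        ≤ 3*ε*(|Real.log a - Real.log b| + K*t/(a*b)) :=
          mul_le_mul_of_nonneg_right (by linarith) hWnn
      _ = (3*|Real.log a - Real.log b|)*ε + 3*K/(a*b)*(ε*t) := by ring
  have habs1 : |1/(2*(1/2+A)) * ((Real.log (1+m*t/a) - m*t/a)
          - (Real.log (1+(R-m*t)/b) - (R-m*t)/b) + Real.log (1+(-B)) - R/b)
        + (1/(2*(1/2+A)) - 1) * ((Real.log a - Real.log b) + m*t/(a*b))|
      ≤ 1/(2*(1/2+A))*|(Real.log (1+m*t/a) - m*t/a)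
          - (Real.log (1+(R-m*t)/b) - (R-m*t)/b) + Real.log (1+(-B)) - R/b|
        + (1 - 1/(2*(1/2+A)))*|(Real.log a - Real.log b) + m*t/(a*b)| := by
    refine (abs_add_le _ _).trans (le_of_eq ?_)
    rw [abs_mul, abs_mul, abs_of_pos hs0,
      abs_of_nonpos (by linarith : 1/(2*(1/2+A)) - 1 ≤ 0)]
    ring
  have he5 : 5*ε/b = 5/b*ε := by ring
  linarith [habs1, g1, g2, g3, hP1, hP2, hB_ub, he5,
    abs_nonneg (Real.log a - Real.log b), hε.le]


/-- The rescaled root `μ̃(ε) = 1/2 + (1/2+μ₁)ε + μ̃₂(ε) ε² log²(ε)`. -/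
def muTilde (μ₁ : ℝ) (μ₂ : ℝ → ℝ) (ε : ℝ) : ℝ :=
  1 / 2 + (1 / 2 + μ₁) * ε + μ₂ ε * ε ^ 2 * (Real.log ε) ^ 2

/-- The rescaled root `ν̃(ε) = √(μ̃(ε)² − ε/(1−ε))`. -/
def nuTilde (μ₁ : ℝ) (μ₂ : ℝ → ℝ) (ε : ℝ) : ℝ :=
  Real.sqrt (muTilde μ₁ μ₂ ε ^ 2 - ε / (1 - ε))

/-- Asymptotic expansion of the key logarithmic term of the dispersion relation:
with `μ̃(ε) = 1/2 + (1/2+μ₁)ε + μ̃₂(ε) ε² log²ε` and `ν̃(ε) = √(μ̃(ε)² − ε/(1−ε))`, the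
quantity `(1/(2μ̃)) log((μ̃−1/2)/(1/2−ν̃))` equals
`log((1/2+μ₁)/(1/2−μ₁)) + (μ̃₂/(1/4−μ₁²)) ε log²ε + o(ε log²ε)` as `ε → 0⁺`. -/
theorem statement17 (μ₁ K ε₀ : ℝ) (hμ₁ : μ₁ ∈ Set.Ioo (-(1 / 2) : ℝ) (1 / 2))
    (hK : 0 < K) (hε₀ : 0 < ε₀) (μ₂ : ℝ → ℝ)
    (hμ₂ : ∀ ε ∈ Set.Ioo (0:ℝ) ε₀, |μ₂ ε| ≤ K) :
    Filter.Tendsto (fun ε : ℝ =>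
      ((1 / (2 * muTilde μ₁ μ₂ ε))
          * Real.log ((muTilde μ₁ μ₂ ε - 1 / 2) / (1 / 2 - nuTilde μ₁ μ₂ ε))
        - Real.log ((1 / 2 + μ₁) / (1 / 2 - μ₁))
        - (μ₂ ε / (1 / 4 - μ₁ ^ 2)) * ε * (Real.log ε) ^ 2) / (ε * (Real.log ε) ^ 2))
      (nhdsWithin 0 (Set.Ioi 0)) (nhds 0) := by
  obtain ⟨h1, h2⟩ := hμ₁
  have ha : (0:ℝ) < 1/2 + μ₁ := by linarith
  have hb : (0:ℝ) < 1/2 - μ₁ := by linarith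
  have hT : Filter.Tendsto (fun ε : ℝ => ε * Real.log ε ^ 2)
      (nhdsWithin 0 (Set.Ioi 0)) (nhds 0) := by
    have h := tendsto_log_mul_rpow_nhdsGT_zero (by norm_num : (0:ℝ) < 1/2)
    have h2' := h.mul h
    rw [mul_zero] at h2'
    apply h2'.congr'
    filter_upwards [self_mem_nhdsWithin] with x hx
    have hx0 : (0:ℝ) < x := hx
    have hxx : (x:ℝ)^(1/2:ℝ) * x^(1/2:ℝ) = x := by
      rw [← Real.rpow_add hx0]; norm_num
    calc (Real.log x * x^(1/2:ℝ)) * (Real.log x * x^(1/2:ℝ))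
        = Real.log x ^ 2 * ((x:ℝ)^(1/2:ℝ) * x^(1/2:ℝ)) := by ring
      _ = Real.log x ^ 2 * x := by rw [hxx]
      _ = x * Real.log x ^ 2 := by ring
  have hID : Filter.Tendsto (fun ε : ℝ => ε) (nhdsWithin 0 (Set.Ioi 0)) (nhds 0) :=
    (continuous_id.tendsto 0).mono_left nhdsWithin_le_nhds
  apply squeeze_zero_norm'
    (a := fun ε : ℝ => (2*K^2/(1/2+μ₁)^2 + 4*K^2/(1/2-μ₁)^2)*(ε*Real.log ε^2)
      + (144/(1/2-μ₁)^2 + 3*K/((1/2+μ₁)*(1/2-μ₁)))*ε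
      + (4 + 5/(1/2-μ₁) + 3*|Real.log (1/2+μ₁) - Real.log (1/2-μ₁)|)/(Real.log ε^2))
  · -- eventual bound
    have hδ : (0:ℝ) < min ε₀ (min (Real.exp (-1)) (1/16)) :=
      lt_min hε₀ (lt_min (Real.exp_pos _) (by norm_num))
    have ev1 : ∀ᶠ ε in nhdsWithin (0:ℝ) (Set.Ioi 0),
        ε ∈ Set.Ioo 0 (min ε₀ (min (Real.exp (-1)) (1/16))) :=
      Ioo_mem_nhdsGT_of_mem ⟨le_refl 0, hδ⟩
    have hKT : Filter.Tendsto (fun ε : ℝ => K * (ε * Real.log ε^2))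
        (nhdsWithin 0 (Set.Ioi 0)) (nhds 0) := by
      have := hT.const_mul K; rwa [mul_zero] at this
    have ev2 := hKT.eventually_lt_const (show (0:ℝ) < (1/2+μ₁)/2 by linarith)
    have h6T : Filter.Tendsto (fun ε : ℝ => 6*ε + K*(ε*Real.log ε^2))
        (nhdsWithin 0 (Set.Ioi 0)) (nhds 0) := by
      have := (hID.const_mul 6).add hKT
      rwa [mul_zero, add_zero] at this
    have ev3 := h6T.eventually_lt_const (show (0:ℝ) < (1/2-μ₁)/2 by linarith)
    filter_upwards [ev1, ev2, ev3] with ε hε1 hε2 hε3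
    obtain ⟨hε0, hεlt⟩ := hε1
    have hεε₀ : ε < ε₀ := lt_of_lt_of_le hεlt (min_le_left _ _)
    have hεexp : ε ≤ Real.exp (-1) :=
      le_of_lt (lt_of_lt_of_le hεlt (le_trans (min_le_right _ _) (min_le_left _ _)))
    have hε16 : ε ≤ 1/16 :=
      le_of_lt (lt_of_lt_of_le hεlt (le_trans (min_le_right _ _) (min_le_right _ _)))
    have hm := hμ₂ ε ⟨hε0, hεε₀⟩
    have hL2 : 1 ≤ Real.log ε ^ 2 := by
      have hlog : Real.log ε ≤ -1 := by
        have := Real.log_le_log hε0 hεexp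
        rwa [Real.log_exp] at this
      nlinarith
    rw [Real.norm_eq_abs]
    have e0 : muTilde μ₁ μ₂ ε = 1/2 + ε*((1/2+μ₁) + μ₂ ε*(ε*Real.log ε^2)) := by
      unfold muTilde; ring
    have e1 : muTilde μ₁ μ₂ ε - 1/2 = ε*((1/2+μ₁) + μ₂ ε*(ε*Real.log ε^2)) := by
      rw [e0]; ring
    have e3 : nuTilde μ₁ μ₂ ε
        = Real.sqrt ((1/2 + ε*((1/2+μ₁) + μ₂ ε*(ε*Real.log ε^2)))^2 - ε/(1-ε)) := by
      unfold nuTilde; rw [e0]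
    have e4 : (μ₂ ε/(1/4 - μ₁^2))*ε*Real.log ε^2
        = μ₂ ε/((1/2+μ₁)*(1/2-μ₁))*(ε*Real.log ε^2) := by
      rw [show (1:ℝ)/4 - μ₁^2 = (1/2+μ₁)*(1/2-μ₁) by ring]; ring
    rw [e1, e3, e0, e4]
    exact key_bound (1/2+μ₁) (1/2-μ₁) K ε (μ₂ ε) (ε*Real.log ε^2) (Real.log ε^2)
      ha (by linarith) hb (by ring) hK hε0 hε16 hm hL2 rfl
      (le_of_lt hε2) (le_of_lt hε3)
  · -- tendsto of the bound
    have t1 : Filter.Tendsto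
        (fun ε : ℝ => (2*K^2/(1/2+μ₁)^2 + 4*K^2/(1/2-μ₁)^2)*(ε*Real.log ε^2))
        (nhdsWithin 0 (Set.Ioi 0)) (nhds 0) := by
      have := hT.const_mul (2*K^2/(1/2+μ₁)^2 + 4*K^2/(1/2-μ₁)^2)
      rwa [mul_zero] at this
    have t2 : Filter.Tendsto
        (fun ε : ℝ => (144/(1/2-μ₁)^2 + 3*K/((1/2+μ₁)*(1/2-μ₁)))*ε)
        (nhdsWithin 0 (Set.Ioi 0)) (nhds 0) := by
      have := hID.const_mul (144/(1/2-μ₁)^2 + 3*K/((1/2+μ₁)*(1/2-μ₁)))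
      rwa [mul_zero] at this
    have t3 : Filter.Tendsto
        (fun ε : ℝ => (4 + 5/(1/2-μ₁) + 3*|Real.log (1/2+μ₁) - Real.log (1/2-μ₁)|)
          /(Real.log ε^2)) (nhdsWithin 0 (Set.Ioi 0)) (nhds 0) := by
      have hlb := Real.tendsto_log_nhdsGT_zero
      have habs : Filter.Tendsto (fun ε : ℝ => |Real.log ε|)
          (nhdsWithin 0 (Set.Ioi 0)) Filter.atTop := tendsto_abs_atBot_atTop.comp hlb
      have hsq : Filter.Tendsto (fun ε : ℝ => Real.log ε ^ 2)
          (nhdsWithin 0 (Set.Ioi 0)) Filter.atTop := by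
        have h' := (tendsto_pow_atTop (two_ne_zero)).comp habs
        apply h'.congr; intro x; simp [sq_abs]
      exact Filter.Tendsto.div_atTop tendsto_const_nhds hsq
    have := (t1.add t2).add t3
    simpa using this

end
end
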